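/- arXiv:1504.02693 — 8 statements merged into one kernel-verified Lean document; each statement's English description precedes it below -/
import Mathlib

section
/- Under the stated assumptions, √n · [ (R(N(n·m̂_{u_n}, n·ŝ_{u_n}²)) − R(N(n·m, n·s²)))/n − (m̂_{u_n} − m) ] converges to 0 P-almost surely as n → ∞; that is, (1/n)(R(N(n·m̂_{u_n}, n·ŝ_{u_n}²)) − R(N(n·m, n·s²))) = (m̂_{u_n} − m) + o_{P-a.s.}(n^{−1/2}). -/
open MeasureTheory ProbabilityTheory Filter
open scoped ENNReal NNReal Topology

noncomputable section

/-- Distribution function of a Borel measure on ℝ. -/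
def distFun (μ : Measure ℝ) (x : ℝ) : ℝ := (μ (Set.Iic x)).toReal

/-- Nonuniform Kolmogorov distance with weight `x ↦ 1 + |x|^λ`. -/
def kolDist (lam : ℝ) (μ ν : Measure ℝ) : ℝ≥0∞ :=
  ⨆ x : ℝ, ENNReal.ofReal (|distFun μ x - distFun ν x| * (1 + |x| ^ lam))

/-- The set `M₁^λ` of probability measures on ℝ with finite nonuniform
Kolmogorov distance to `δ₀`. -/
def Mlam (lam : ℝ) : Set (Measure ℝ) :=
  {μ | IsProbabilityMeasure μ ∧ kolDist lam μ (Measure.dirac 0) < ⊤}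

/-- The standard normal distribution. -/
def stdNormal : Measure ℝ := gaussianReal 0 1

/-- The normal distribution with mean `a` and variance `v` (Dirac at `a` for `v ≤ 0`). -/
def normalD (a v : ℝ) : Measure ℝ := gaussianReal a v.toNNReal

/-- `n`-fold convolution `μ^{*n}` (with `μ^{*0} := δ₀`). -/
def convPow (μ : Measure ℝ) : ℕ → Measure ℝ
  | 0 => Measure.dirac 0
  | n + 1 => Measure.map (fun p : ℝ × ℝ => p.1 + p.2) ((convPow μ n).prod μ)

/-- Empirical mean `m̂_u` of the first `u` observations. -/
def sampleMean {Ω : Type*} (Y : ℕ → Ω → ℝ) (u : ℕ) (ω : Ω) : ℝ :=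
  (∑ i ∈ Finset.range u, Y i ω) / u

/-- Empirical standard deviation `ŝ_u` of the first `u` observations. -/
def sampleSD {Ω : Type*} (Y : ℕ → Ω → ℝ) (u : ℕ) (ω : Ω) : ℝ :=
  Real.sqrt ((∑ i ∈ Finset.range u, (Y i ω - sampleMean Y u ω) ^ 2) / u)

/-- Empirical measure `μ̂_u` of the first `u` observations. -/
def empMeas {Ω : Type*} (Y : ℕ → Ω → ℝ) (u : ℕ) (ω : Ω) : Measure ℝ :=
  (u : ℝ≥0∞)⁻¹ • ∑ i ∈ Finset.range u, Measure.dirac (Y i ω)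

instance : IsProbabilityMeasure stdNormal := by unfold stdNormal; infer_instance

lemma integrable_abs_rpow_stdNormal {s : ℝ} (hs : 0 < s) :
    Integrable (fun x => |x| ^ s) stdNormal := by
  have hb : (0:ℝ) < 1/2 := by norm_num
  have h1 : Integrable (fun x : ℝ => x ^ s * Real.exp (-(1/2) * x ^ 2)) :=
    integrable_rpow_mul_exp_neg_mul_sq hb (by linarith)
  have h2 : Integrable (fun x : ℝ => (-x) ^ s * Real.exp (-(1/2) * x ^ 2)) := by
    rw [← (Measure.measurePreserving_neg (volume : Measure ℝ)).integrable_comp_emb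
      (Homeomorph.neg ℝ).measurableEmbedding] at h1
    simpa [Function.comp_def] using h1
  have habs : Integrable (fun x : ℝ => |x| ^ s * Real.exp (-(1/2) * x ^ 2)) volume := by
    refine (h1.abs.add h2.abs).mono' ?_ (ae_of_all _ fun x => ?_)
    · exact ((measurable_id.abs.pow_const s).mul
        (by fun_prop : Measurable fun x : ℝ => Real.exp (-(1/2) * x ^ 2))).aestronglyMeasurable
    · have hx : 0 ≤ |x| ^ s * Real.exp (-(1/2) * x ^ 2) :=
        mul_nonneg (Real.rpow_nonneg (abs_nonneg x) s) (Real.exp_nonneg _)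
      rw [Real.norm_eq_abs, abs_of_nonneg hx]
      rcases le_or_gt 0 x with hx0 | hx0
      · have : |x| ^ s * Real.exp (-(1/2) * x ^ 2) = |x ^ s * Real.exp (-(1/2) * x ^ 2)| := by
          rw [abs_of_nonneg hx0, abs_mul, abs_of_nonneg (Real.rpow_nonneg hx0 s),
            abs_of_nonneg (Real.exp_nonneg _)]
        rw [this]
        exact le_add_of_nonneg_right (abs_nonneg _)
      · have : |x| ^ s * Real.exp (-(1/2) * x ^ 2) = |(-x) ^ s * Real.exp (-(1/2) * x ^ 2)| := by
          rw [abs_of_neg hx0, abs_mul, abs_of_nonneg (Real.rpow_nonneg (by linarith) s),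
            abs_of_nonneg (Real.exp_nonneg _)]
        rw [this]
        exact le_add_of_nonneg_left (abs_nonneg _)
  rw [stdNormal, gaussianReal_of_var_ne_zero 0 one_ne_zero,
    integrable_withDensity_iff (measurable_gaussianPDF 0 1)
      (ae_of_all _ fun x => ENNReal.ofReal_lt_top)]
  have : (fun x : ℝ => |x| ^ s * (gaussianPDF 0 1 x).toReal)
      = fun x : ℝ => (Real.sqrt (2 * Real.pi))⁻¹ * (|x| ^ s * Real.exp (-(1/2) * x ^ 2)) := by
    funext x
    rw [gaussianPDF, ENNReal.toReal_ofReal (gaussianPDFReal_nonneg _ _ _), gaussianPDFReal]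
    push_cast
    ring_nf
  rw [this]
  exact habs.const_mul _

lemma distFun_nonneg (μ : Measure ℝ) (x : ℝ) : 0 ≤ distFun μ x := ENNReal.toReal_nonneg

lemma distFun_le_one (μ : Measure ℝ) [IsProbabilityMeasure μ] (x : ℝ) : distFun μ x ≤ 1 := by
  rw [distFun]
  exact ENNReal.toReal_le_of_le_ofReal one_pos.le (by simpa using prob_le_one)

lemma stdNormal_mem_Mlam {lam : ℝ} (hlam : 2 < lam) : stdNormal ∈ Mlam lam := by
  refine ⟨inferInstance, ?_⟩
  set E : ℝ := ∫ x, |x| ^ (lam + 1) ∂stdNormal with hE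
  have hEnn : 0 ≤ E := integral_nonneg fun x => Real.rpow_nonneg (abs_nonneg x) _
  have hmom : Integrable (fun x => |x| ^ (lam + 1)) stdNormal :=
    integrable_abs_rpow_stdNormal (by linarith)
  have hmarkov : ∀ ε : ℝ, 0 < ε →
      (stdNormal {y : ℝ | ε ≤ |y| ^ (lam + 1)}).toReal ≤ E / ε := by
    intro ε hε
    rw [le_div_iff₀ hε, mul_comm]
    exact mul_meas_ge_le_integral_of_nonneg
      (ae_of_all _ fun x => Real.rpow_nonneg (abs_nonneg x) _) hmom ε
  have key : ∀ x : ℝ, |distFun stdNormal x - distFun (Measure.dirac 0) x| * (1 + |x| ^ lam)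
      ≤ 2 + 2 * E := by
    intro x
    have hdirac : distFun (Measure.dirac 0) x = if (0:ℝ) ≤ x then 1 else 0 := by
      rw [distFun, Measure.dirac_apply' _ measurableSet_Iic]
      by_cases h : (0:ℝ) ≤ x <;> simp [Set.indicator, h]
    rcases le_or_gt (|x|) 1 with hx1 | hx1
    · have h1 : |distFun stdNormal x - distFun (Measure.dirac 0) x| ≤ 1 := by
        have hF0 := distFun_nonneg stdNormal x
        have hF1 := distFun_le_one stdNormal x
        have hD0 : 0 ≤ distFun (Measure.dirac 0) x := by rw [hdirac]; split <;> norm_num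
        have hD1 : distFun (Measure.dirac 0) x ≤ 1 := by rw [hdirac]; split <;> norm_num
        rw [abs_sub_le_iff]
        constructor <;> linarith
      have h2 : |x| ^ lam ≤ 1 := Real.rpow_le_one (abs_nonneg x) hx1 (by linarith)
      nlinarith [abs_nonneg (distFun stdNormal x - distFun (Measure.dirac 0) x)]
    · have hlam1 : (0:ℝ) < lam + 1 := by linarith
      have hxpow_pos : 0 < |x| ^ (lam + 1) := Real.rpow_pos_of_pos (by linarith) _
      have hsum : 1 + |x| ^ lam ≤ 2 * |x| ^ lam := by
        have : (1:ℝ) ≤ |x| ^ lam := Real.one_le_rpow hx1.le (by linarith)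
        linarith
      have hratio : E / |x| ^ (lam + 1) * (2 * |x| ^ lam) ≤ 2 * E := by
        rw [Real.rpow_add (by linarith : (0:ℝ) < |x|), Real.rpow_one]
        rw [div_mul_eq_mul_div, mul_comm E, mul_assoc]
        rw [div_le_iff₀ (by positivity)]
        have h1le : 1 ≤ |x| := hx1.le
        have hb : 0 ≤ 2 * E * |x| ^ lam := by positivity
        calc 2 * (|x| ^ lam * E) = 2 * E * |x| ^ lam * 1 := by ring
          _ ≤ 2 * E * |x| ^ lam * |x| := mul_le_mul_of_nonneg_left h1le hb
          _ = 2 * E * (|x| ^ lam * |x|) := by ring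
      have htail : |distFun stdNormal x - distFun (Measure.dirac 0) x|
          ≤ E / |x| ^ (lam + 1) := by
        rcases le_or_gt 0 x with hx0 | hx0
        · rw [hdirac, if_pos hx0]
          have hcompl : distFun stdNormal x + (stdNormal (Set.Ioi x)).toReal = 1 := by
            have h := measure_add_measure_compl (μ := stdNormal) (measurableSet_Iic (a := x))
            rw [Set.compl_Iic] at h
            have := congrArg ENNReal.toReal h
            rwa [ENNReal.toReal_add (measure_ne_top _ _) (measure_ne_top _ _),
              measure_univ, ENNReal.toReal_one] at this
          have hsub : Set.Ioi x ⊆ {y : ℝ | |x| ^ (lam + 1) ≤ |y| ^ (lam + 1)} := by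
            intro y hy
            have : |x| ≤ |y| := by
              rw [abs_of_nonneg hx0]
              exact le_trans (le_of_lt hy) (le_abs_self y)
            exact Real.rpow_le_rpow (abs_nonneg x) this hlam1.le
          have : (stdNormal (Set.Ioi x)).toReal ≤ E / |x| ^ (lam + 1) :=
            le_trans (ENNReal.toReal_mono (measure_ne_top _ _) (measure_mono hsub))
              (hmarkov _ hxpow_pos)
          rw [abs_sub_comm, abs_of_nonneg (by linarith [distFun_le_one stdNormal x])]
          linarith
        · rw [hdirac, if_neg (not_le.mpr hx0), sub_zero,
            abs_of_nonneg (distFun_nonneg _ _)]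
          have hsub : Set.Iic x ⊆ {y : ℝ | |x| ^ (lam + 1) ≤ |y| ^ (lam + 1)} := by
            intro y hy
            have : |x| ≤ |y| := by
              rw [abs_of_neg hx0, abs_of_nonpos (le_trans hy hx0.le)]
              simpa using hy
            exact Real.rpow_le_rpow (abs_nonneg x) this hlam1.le
          exact le_trans (ENNReal.toReal_mono (measure_ne_top _ _) (measure_mono hsub))
            (hmarkov _ hxpow_pos)
      calc |distFun stdNormal x - distFun (Measure.dirac 0) x| * (1 + |x| ^ lam)
          ≤ E / |x| ^ (lam + 1) * (2 * |x| ^ lam) := by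
            apply mul_le_mul htail hsum (by positivity) (by positivity)
        _ ≤ 2 * E := hratio
        _ ≤ 2 + 2 * E := by linarith
  calc kolDist lam stdNormal (Measure.dirac 0)
      ≤ ENNReal.ofReal (2 + 2 * E) := iSup_le fun x => ENNReal.ofReal_le_ofReal (key x)
    _ < ⊤ := ENNReal.ofReal_lt_top

lemma stdNormal_map_affine (a v : ℝ) (hv : 0 ≤ v) :
    Measure.map (fun x => Real.sqrt v * x + a) stdNormal = gaussianReal a v.toNNReal := by
  have h1 : (fun x : ℝ => Real.sqrt v * x + a) = (fun x => x + a) ∘ (fun x => Real.sqrt v * x) :=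
    rfl
  rw [h1, ← Measure.map_map (measurable_add_const a) (measurable_const_mul _), stdNormal]
  rw [show (fun x : ℝ => Real.sqrt v * x) = (Real.sqrt v * ·) from rfl,
    gaussianReal_map_const_mul, show (fun x : ℝ => x + a) = (· + a) from rfl,
    gaussianReal_map_add_const]
  congr 1
  · ring
  · ext
    simp [Real.sq_sqrt hv, hv]

/-- Theorem 2.2(i): `(R(N(n·m̂,n·ŝ²)) − R(N(n·m,n·s²)))/n = (m̂_{u_n} − m) + o_{P-a.s.}(n^{-1/2})`. -/
theorem estimated_normal_approx_vs_exact_normal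
    (lam : ℝ) (hlam : 2 < lam)
    (R : Measure ℝ → ℝ)
    (hcash : ∀ 𝔪 ∈ Mlam lam, ∀ a b : ℝ, 0 ≤ a →
      R (Measure.map (fun x => a * x + b) 𝔪) = a * R 𝔪 + b)
    (C₀ β δ : ℝ) (hC₀ : 0 < C₀) (hβ : 0 < β) (hδ : 0 < δ)
    (hd : ∀ 𝔪 ∈ Mlam lam, kolDist lam 𝔪 stdNormal ≤ ENNReal.ofReal δ →
      |R 𝔪 - R stdNormal| ≤ C₀ * (kolDist lam 𝔪 stdNormal).toReal ^ β)
    {Ω : Type*} [MeasurableSpace Ω] (P : Measure Ω) [IsProbabilityMeasure P]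
    (Y : ℕ → Ω → ℝ) (hYmeas : ∀ i, Measurable (Y i))
    (hYindep : iIndepFun Y P)
    (μ : Measure ℝ) [IsProbabilityMeasure μ] (hYlaw : ∀ i, Measure.map (Y i) P = μ)
    (m s : ℝ) (hm : m = ∫ x, x ∂μ) (hs : s = Real.sqrt (variance id μ))
    (hvar : 0 < variance id μ)
    (hmom : Integrable (fun x => |x| ^ lam) μ)
    (u : ℕ → ℕ) (hupos : ∀ n, 0 < u n)
    (c : ℝ) (hcpos : 0 < c)
    (huc : Tendsto (fun n : ℕ => (u n : ℝ) / n) atTop (𝓝 c))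
    :
    ∀ᵐ ω ∂P, Tendsto (fun n : ℕ =>
      Real.sqrt n *
        ((R (normalD ((n : ℝ) * sampleMean Y (u n) ω) ((n : ℝ) * (sampleSD Y (u n) ω) ^ 2))
            - R (normalD ((n : ℝ) * m) ((n : ℝ) * s ^ 2))) / n
          - (sampleMean Y (u n) ω - m)))
      atTop (𝓝 0) := by
  have hmemN := stdNormal_mem_Mlam hlam
  have hR : ∀ a v : ℝ, 0 ≤ v → R (normalD a v) = Real.sqrt v * R stdNormal + a := by
    intro a v hv
    rw [normalD, ← stdNormal_map_affine a v hv]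
    exact hcash stdNormal hmemN _ a (Real.sqrt_nonneg v)
  -- integrability of the identity and the square under μ
  have hint_abs : Integrable (fun x : ℝ => 1 + |x| ^ lam) μ := (integrable_const 1).add hmom
  have hrpow_nonneg : ∀ x : ℝ, (0:ℝ) ≤ |x| ^ lam :=
    fun x => Real.rpow_nonneg (abs_nonneg x) _
  have hint1 : Integrable (fun x : ℝ => x) μ := by
    refine hint_abs.mono' aestronglyMeasurable_id (ae_of_all _ fun x => ?_)
    rw [Real.norm_eq_abs]
    rcases le_or_gt (|x|) 1 with h | h
    · linarith [hrpow_nonneg x]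
    · calc |x| = |x| ^ (1:ℝ) := (Real.rpow_one _).symm
        _ ≤ |x| ^ lam := Real.rpow_le_rpow_of_exponent_le h.le (by linarith)
        _ ≤ 1 + |x| ^ lam := by linarith
  have hint2 : Integrable (fun x : ℝ => x ^ 2) μ := by
    refine hint_abs.mono' (measurable_id.pow_const 2).aestronglyMeasurable
      (ae_of_all _ fun x => ?_)
    have hx2 : ‖x ^ 2‖ = |x| ^ ((2:ℕ):ℝ) := by
      rw [Real.norm_eq_abs, abs_pow, Real.rpow_natCast]
    rw [hx2]
    rcases le_or_gt (|x|) 1 with h | h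
    · have : |x| ^ ((2:ℕ):ℝ) ≤ 1 := Real.rpow_le_one (abs_nonneg x) h (by norm_num)
      linarith [hrpow_nonneg x]
    · calc |x| ^ ((2:ℕ):ℝ) ≤ |x| ^ lam :=
          Real.rpow_le_rpow_of_exponent_le h.le (by push_cast; linarith)
        _ ≤ 1 + |x| ^ lam := by linarith
  -- transfer to P
  have hY0 : Integrable (Y 0) P := by
    have h : Integrable (fun x : ℝ => x) (Measure.map (Y 0) P) := by rw [hYlaw 0]; exact hint1
    exact (integrable_map_measure aestronglyMeasurable_id (hYmeas 0).aemeasurable).mp h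
  have hY0sq : Integrable (fun ω => Y 0 ω ^ 2) P := by
    have h : Integrable (fun x : ℝ => x ^ 2) (Measure.map (Y 0) P) := by
      rw [hYlaw 0]; exact hint2
    exact (integrable_map_measure (measurable_id.pow_const 2).aestronglyMeasurable
      (hYmeas 0).aemeasurable).mp h
  set M2 : ℝ := ∫ x, x ^ 2 ∂μ with hM2
  have hEY : ∫ ω, Y 0 ω ∂P = m := by
    rw [hm, ← hYlaw 0,
      integral_map (f := fun x : ℝ => x) (hYmeas 0).aemeasurable aestronglyMeasurable_id]
  have hEY2 : ∫ ω, Y 0 ω ^ 2 ∂P = M2 := by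
    rw [hM2, ← hYlaw 0,
      integral_map (f := fun x : ℝ => x ^ 2) (hYmeas 0).aemeasurable
        (measurable_id.pow_const 2).aestronglyMeasurable]
  -- strong laws
  have hident : ∀ i, IdentDistrib (Y i) (Y 0) P P :=
    fun i => ⟨(hYmeas i).aemeasurable, (hYmeas 0).aemeasurable, by rw [hYlaw i, hYlaw 0]⟩
  have hpair : Pairwise (Function.onFun (IndepFun · · P) Y) := fun i j hij => hYindep.indepFun hij
  have hsqmeas : Measurable fun x : ℝ => x ^ 2 := measurable_id.pow_const 2
  have hA' : ∀ᵐ ω ∂P, Tendsto (fun n : ℕ => (∑ i ∈ Finset.range n, Y i ω) / n)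
      atTop (𝓝 m) := by
    have := strong_law_ae_real Y hY0 hpair hident
    simpa [hEY] using this
  have hB' : ∀ᵐ ω ∂P, Tendsto (fun n : ℕ => (∑ i ∈ Finset.range n, Y i ω ^ 2) / n)
      atTop (𝓝 M2) := by
    have hpair2 : Pairwise (Function.onFun (IndepFun · · P) fun i ω => Y i ω ^ 2) :=
      fun i j hij => (hYindep.indepFun hij).comp hsqmeas hsqmeas
    have hident2 : ∀ i, IdentDistrib (fun ω => Y i ω ^ 2) (fun ω => Y 0 ω ^ 2) P P :=
      fun i => (hident i).comp hsqmeas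
    have := strong_law_ae_real (fun i ω => Y i ω ^ 2) hY0sq hpair2 hident2
    simpa [hEY2] using this
  -- variance identities
  have hMem2 : MemLp (id : ℝ → ℝ) 2 μ :=
    (memLp_two_iff_integrable_sq aestronglyMeasurable_id).mpr hint2
  have hvar' : variance id μ = M2 - m ^ 2 := by
    rw [variance_eq_sub hMem2, hm, hM2]
    simp [Pi.pow_apply]
  have hs0 : 0 ≤ s := by rw [hs]; exact Real.sqrt_nonneg _
  have hsM : Real.sqrt (M2 - m ^ 2) = s := by rw [hs, hvar']
  -- u n → ∞
  have huInf : Tendsto u atTop atTop := by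
    have h1 : Tendsto (fun n : ℕ => ((u n : ℝ) / n) * n) atTop atTop :=
      huc.pos_mul_atTop hcpos tendsto_natCast_atTop_atTop
    have h2 : Tendsto (fun n : ℕ => ((u n : ℝ))) atTop atTop := by
      refine h1.congr' ?_
      filter_upwards [eventually_ge_atTop 1] with n hn
      have hn0 : (n:ℝ) ≠ 0 := Nat.cast_ne_zero.mpr (by omega)
      field_simp
    exact tendsto_natCast_atTop_iff.mp h2
  filter_upwards [hA', hB'] with ω hAω hBω
  -- sample SD converges to s
  have hvk : Tendsto (fun k : ℕ => (∑ i ∈ Finset.range k, Y i ω ^ 2) / k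
      - ((∑ i ∈ Finset.range k, Y i ω) / k) ^ 2) atTop (𝓝 (M2 - m ^ 2)) :=
    hBω.sub (hAω.pow 2)
  have hsdk : Tendsto (fun k : ℕ => sampleSD Y k ω) atTop (𝓝 s) := by
    have hcont : Tendsto (fun k : ℕ => Real.sqrt ((∑ i ∈ Finset.range k, Y i ω ^ 2) / k
        - ((∑ i ∈ Finset.range k, Y i ω) / k) ^ 2)) atTop (𝓝 s) := by
      have := (Real.continuous_sqrt.tendsto (M2 - m ^ 2)).comp hvk
      rwa [hsM] at this
    refine hcont.congr' ?_
    filter_upwards [eventually_ge_atTop 1] with k hk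
    have hk0 : (k:ℝ) ≠ 0 := Nat.cast_ne_zero.mpr (by omega)
    rw [sampleSD, sampleMean]
    congr 1
    have hexp : ∑ i ∈ Finset.range k, (Y i ω - (∑ j ∈ Finset.range k, Y j ω) / k) ^ 2
        = ∑ i ∈ Finset.range k, Y i ω ^ 2 - (∑ j ∈ Finset.range k, Y j ω) ^ 2 / k := by
      set S := ∑ j ∈ Finset.range k, Y j ω with hS
      have hterm : ∀ i ∈ Finset.range k,
          (Y i ω - S / k) ^ 2 = Y i ω ^ 2 - 2 * (S / k) * Y i ω + (S / k) ^ 2 :=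
        fun i _ => by ring
      rw [Finset.sum_congr rfl hterm]
      rw [Finset.sum_add_distrib, Finset.sum_sub_distrib, ← Finset.mul_sum, ← hS,
        Finset.sum_const, Finset.card_range, nsmul_eq_mul]
      field_simp
      ring
    rw [hexp]
    field_simp
  have hsd : Tendsto (fun n : ℕ => sampleSD Y (u n) ω) atTop (𝓝 s) := hsdk.comp huInf
  set R₀ := R stdNormal with hR₀
  have hkey : ∀ᶠ n : ℕ in atTop, Real.sqrt n *
        ((R (normalD ((n : ℝ) * sampleMean Y (u n) ω) ((n : ℝ) * (sampleSD Y (u n) ω) ^ 2))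
            - R (normalD ((n : ℝ) * m) ((n : ℝ) * s ^ 2))) / n
          - (sampleMean Y (u n) ω - m))
      = (sampleSD Y (u n) ω - s) * R₀ := by
    filter_upwards [eventually_ge_atTop 1] with n hn
    have hn0 : (0:ℝ) < (n:ℝ) := by exact_mod_cast Nat.pos_of_ne_zero (by omega)
    have ht0 : 0 ≤ sampleSD Y (u n) ω := Real.sqrt_nonneg _
    rw [hR _ _ (by positivity), hR _ _ (by positivity),
      Real.sqrt_mul hn0.le, Real.sqrt_mul hn0.le, Real.sqrt_sq ht0, Real.sqrt_sq hs0]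
    set q := Real.sqrt (n:ℝ) with hqdef
    have hq : q * q = (n:ℝ) := Real.mul_self_sqrt hn0.le
    have hq0 : q ≠ 0 := by
      rw [hqdef]
      exact (Real.sqrt_pos.mpr hn0).ne'
    rw [← hq]
    field_simp
    ring
  have hlim : Tendsto (fun n : ℕ => (sampleSD Y (u n) ω - s) * R₀) atTop (𝓝 ((s - s) * R₀)) :=
    (hsd.sub tendsto_const_nhds).mul tendsto_const_nhds
  rw [show (s - s) * R₀ = 0 by ring] at hlim
  refine hlim.congr' ?_
  filter_upwards [hkey] with n hn
  exact hn.symm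
end
end

section
/- Let g be a convex distortion function and suppose there exist constants L, β > 0 such that 1 − g(t) ≤ L·(1 − t)^β for all t ∈ [0,1]. Let λ > 0 with λβ > 1. Then: (c) R_g(𝔪) is finite for every 𝔪 ∈ M₁^λ, and R_g(𝔪 ∘ T_{a,b}⁻¹) = a·R_g(𝔪) + b for every 𝔪 ∈ M₁^λ, a ≥ 0 and b ∈ ℝ, where T_{a,b}(x) := a·x + b; and (d) there exists a constant C > 0 such that |R_g(𝔪) − R_g(N(0,1))| ≤ C·d_λ(𝔪, N(0,1))^β for all 𝔪 ∈ M₁^λ, where N(0,1) is the standard normal distribution on ℝ. -/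
open MeasureTheory ProbabilityTheory Filter
open scoped ENNReal NNReal Topology

noncomputable section

/-- Distortion risk functional `R_g(𝔪) = -∫_{-∞}^0 g(F(x))dx + ∫_0^∞ (1-g(F(x)))dx`. -/
def distRisk (g : ℝ → ℝ) (𝔪 : Measure ℝ) : ℝ :=
  -(∫ x in Set.Iio (0 : ℝ), g (distFun 𝔪 x)) + ∫ x in Set.Ioi (0 : ℝ), (1 - g (distFun 𝔪 x))

open Set Real

namespace DRAux

/-! ### distFun basics -/

lemma distFun_nonneg (μ : Measure ℝ) (x : ℝ) : 0 ≤ distFun μ x := ENNReal.toReal_nonneg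

lemma distFun_le_one (μ : Measure ℝ) [IsProbabilityMeasure μ] (x : ℝ) : distFun μ x ≤ 1 := by
  rw [distFun, show (1:ℝ) = (μ Set.univ).toReal by simp]
  exact ENNReal.toReal_mono (measure_ne_top _ _) (measure_mono (Set.subset_univ _))

lemma distFun_mono (μ : Measure ℝ) [IsFiniteMeasure μ] : Monotone (distFun μ) :=
  fun _ _ h => ENNReal.toReal_mono (measure_ne_top _ _) (measure_mono (Set.Iic_subset_Iic.mpr h))

lemma distFun_mem (μ : Measure ℝ) [IsProbabilityMeasure μ] (x : ℝ) :
    distFun μ x ∈ Icc (0:ℝ) 1 := ⟨distFun_nonneg μ x, distFun_le_one μ x⟩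

lemma distFun_dirac (b x : ℝ) : distFun (Measure.dirac b) x = if b ≤ x then 1 else 0 := by
  rw [distFun, Measure.dirac_apply' _ measurableSet_Iic]
  by_cases h : b ≤ x
  · simp [Set.indicator_of_mem, Set.mem_Iic, h]
  · simp [Set.indicator, Set.mem_Iic, h]

lemma weight_pos (lam x : ℝ) : 0 < 1 + |x| ^ lam := by
  have := Real.rpow_nonneg (abs_nonneg x) lam
  linarith

lemma le_kolDist_toReal {lam : ℝ} {μ ν : Measure ℝ} (h : kolDist lam μ ν ≠ ⊤) (x : ℝ) :
    |distFun μ x - distFun ν x| * (1 + |x| ^ lam) ≤ (kolDist lam μ ν).toReal := by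
  have h1 : ENNReal.ofReal (|distFun μ x - distFun ν x| * (1 + |x| ^ lam)) ≤ kolDist lam μ ν :=
    le_iSup (fun x => ENNReal.ofReal (|distFun μ x - distFun ν x| * (1 + |x| ^ lam))) x
  have h2 := ENNReal.toReal_mono h h1
  rwa [ENNReal.toReal_ofReal (mul_nonneg (abs_nonneg _) (weight_pos lam x).le)] at h2

lemma kolDist_le_ofReal {lam : ℝ} {μ ν : Measure ℝ} {D : ℝ}
    (h : ∀ x, |distFun μ x - distFun ν x| * (1 + |x| ^ lam) ≤ D) :
    kolDist lam μ ν ≤ ENNReal.ofReal D :=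
  iSup_le fun x => ENNReal.ofReal_le_ofReal (h x)

/-! ### properties of g -/

section G
variable {g : ℝ → ℝ} {L β : ℝ}

lemma g_mem (hg_mono : MonotoneOn g (Icc 0 1)) (hg0 : g 0 = 0) (hg1 : g 1 = 1)
    {t : ℝ} (ht : t ∈ Icc (0:ℝ) 1) : g t ∈ Icc (0:ℝ) 1 := by
  constructor
  · rw [← hg0]; exact hg_mono (left_mem_Icc.2 zero_le_one) ht ht.1
  · rw [← hg1]; exact hg_mono ht (right_mem_Icc.2 zero_le_one) ht.2

lemma g_le_self (hg_conv : ConvexOn ℝ (Icc 0 1) g) (hg0 : g 0 = 0) (hg1 : g 1 = 1)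
    {t : ℝ} (ht : t ∈ Icc (0:ℝ) 1) : g t ≤ t := by
  have h := hg_conv.2 (left_mem_Icc.2 zero_le_one) (right_mem_Icc.2 zero_le_one)
    (show (0:ℝ) ≤ 1 - t by linarith [ht.2]) ht.1 (by ring)
  simpa [hg0, hg1, smul_eq_mul] using h

lemma convex_increment (hg_conv : ConvexOn ℝ (Icc 0 1) g) {s t : ℝ}
    (hs : 0 ≤ s) (hst : s ≤ t) (ht : t ≤ 1) :
    g t + g (1 - (t - s)) ≤ g s + g 1 := by
  rcases eq_or_lt_of_le (hst.trans ht) with hs1 | hs1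
  · subst hs1
    have hteq : t = 1 := le_antisymm ht hst
    subst hteq
    norm_num
  · set θ := (1 - t)/(1 - s) with hθ
    have hden : (0:ℝ) < 1 - s := by linarith
    have hθ0 : 0 ≤ θ := div_nonneg (by linarith) hden.le
    have hθ1 : θ ≤ 1 := (div_le_one hden).2 (by linarith)
    have hprod : θ * (1 - s) = 1 - t := div_mul_cancel₀ _ hden.ne'
    have e1 : θ • s + (1 - θ) • (1:ℝ) = t := by
      rw [smul_eq_mul, smul_eq_mul]; linear_combination -hprod
    have e2 : (1 - θ) • s + θ • (1:ℝ) = 1 - (t - s) := by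
      rw [smul_eq_mul, smul_eq_mul]; linear_combination hprod
    have c1 := hg_conv.2 ⟨hs, by linarith⟩ ⟨zero_le_one, le_refl (1:ℝ)⟩ hθ0
      (by linarith : (0:ℝ) ≤ 1 - θ) (by ring)
    have c2 := hg_conv.2 ⟨hs, by linarith⟩ ⟨zero_le_one, le_refl (1:ℝ)⟩
      (by linarith : (0:ℝ) ≤ 1 - θ) hθ0 (by ring)
    rw [e1] at c1; rw [e2] at c2
    have hsum := add_le_add c1 c2
    simp only [smul_eq_mul] at hsum
    have hring : θ * g s + (1 - θ) * g 1 + ((1 - θ) * g s + θ * g 1) = g s + g 1 := by ring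
    linarith

lemma beta_le_one (hg_conv : ConvexOn ℝ (Icc 0 1) g) (hg0 : g 0 = 0) (hg1 : g 1 = 1)
    (hL : 0 < L) (hβ : 0 < β)
    (hdom : ∀ t ∈ Set.Icc (0 : ℝ) 1, 1 - g t ≤ L * (1 - t) ^ β) : β ≤ 1 := by
  by_contra hβ1
  push_neg at hβ1
  set δ : ℝ := min (1/2) ((2*L)⁻¹ ^ (1/(β-1))) with hδ
  have hδpos : 0 < δ :=
    lt_min (by norm_num) (Real.rpow_pos_of_pos (by positivity) _)
  have hδle : δ ≤ 1/2 := min_le_left _ _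
  have ht : 1 - δ ∈ Icc (0:ℝ) 1 := ⟨by linarith, by linarith⟩
  have h1 : δ ≤ 1 - g (1-δ) := by
    have := g_le_self hg_conv hg0 hg1 ht; linarith
  have h2 := hdom _ ht
  have h3 : (1:ℝ) - (1 - δ) = δ := by ring
  rw [h3] at h2
  have hδβ : δ ^ β = δ ^ (β-1) * δ := by
    rw [← Real.rpow_add_one hδpos.ne' (β-1)]
    norm_num
  have h4 : δ ^ (β-1) ≤ ((2*L)⁻¹ ^ (1/(β-1))) ^ (β-1) :=
    Real.rpow_le_rpow hδpos.le (min_le_right _ _) (by linarith)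
  rw [← Real.rpow_mul (by positivity : (0:ℝ) ≤ (2*L)⁻¹), one_div,
    inv_mul_cancel₀ (by linarith : β - 1 ≠ 0), Real.rpow_one] at h4
  have h5 : L * δ ^ (β-1) ≤ 1/2 := by
    calc L * δ ^ (β-1) ≤ L * (2*L)⁻¹ := mul_le_mul_of_nonneg_left h4 hL.le
      _ = 1/2 := by field_simp
  have h6 : L * δ ^ β ≤ δ/2 := by
    rw [hδβ, ← mul_assoc]
    nlinarith [hδpos.le]
  linarith

lemma g_holder (hg_mono : MonotoneOn g (Icc 0 1)) (hg_conv : ConvexOn ℝ (Icc 0 1) g)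
    (hg0 : g 0 = 0) (hg1 : g 1 = 1) (hL : 0 < L) (hβ : 0 < β)
    (hdom : ∀ t ∈ Set.Icc (0 : ℝ) 1, 1 - g t ≤ L * (1 - t) ^ β)
    {s t : ℝ} (hs : s ∈ Icc (0:ℝ) 1) (ht : t ∈ Icc (0:ℝ) 1) :
    |g t - g s| ≤ L * |t - s| ^ β := by
  wlog hst : s ≤ t generalizing s t
  · rw [abs_sub_comm, abs_sub_comm t s]
    exact this ht hs (by linarith [le_of_not_ge hst])
  rcases eq_or_lt_of_le hst with rfl | hlt
  · simp [Real.zero_rpow hβ.ne']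
  · have h1 : 0 ≤ g t - g s := sub_nonneg.2 (hg_mono hs ht hst)
    rw [abs_of_nonneg h1, abs_of_nonneg (by linarith : (0:ℝ) ≤ t - s)]
    have hmem : 1 - (t - s) ∈ Icc (0:ℝ) 1 := ⟨by linarith [hs.1, ht.2], by linarith⟩
    have hinc := convex_increment hg_conv hs.1 hst ht.2
    have h2 := hdom _ hmem
    have h3 : (1 : ℝ) - (1 - (t - s)) = t - s := by ring
    rw [h3] at h2
    rw [hg1] at hinc
    linarith

end G

end DRAux

namespace DRAux

/-! ### integrability helpers -/

lemma integrableOn_of_bounded {f : ℝ → ℝ} {s : Set ℝ} (hvol : volume s ≠ ⊤)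
    (hm : Measurable f) (h0 : ∀ x, 0 ≤ f x) (h1 : ∀ x, f x ≤ 1) :
    IntegrableOn f s volume :=
  Integrable.mono' (integrableOn_const (C := (1:ℝ)) hvol) hm.aestronglyMeasurable
    (ae_of_all _ fun x => by rw [Real.norm_eq_abs, abs_of_nonneg (h0 x)]; exact h1 x)

lemma integrableOn_Ioi_aux {h : ℝ → ℝ} (hm : Measurable h) (h0 : ∀ x, 0 ≤ h x)
    (h1 : ∀ x, h x ≤ 1) {c p : ℝ} (hp : 1 < p)
    (hb : ∀ x : ℝ, 1 ≤ x → h x ≤ c * x ^ (-p)) :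
    IntegrableOn h (Ioi (0:ℝ)) volume := by
  rw [← Ioc_union_Ioi_eq_Ioi (zero_le_one (α := ℝ))]
  refine IntegrableOn.union ?_ ?_
  · exact integrableOn_of_bounded (by simp [Real.volume_Ioc]) hm h0 h1
  · have hint : IntegrableOn (fun x : ℝ => c * x ^ (-p)) (Ioi 1) volume :=
      (integrableOn_Ioi_rpow_of_lt (by linarith) one_pos).const_mul c
    refine Integrable.mono' hint hm.aestronglyMeasurable ?_
    refine (ae_restrict_iff' measurableSet_Ioi).2 (ae_of_all _ fun x hx => ?_)
    rw [Real.norm_eq_abs, abs_of_nonneg (h0 x)]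
    exact hb x (le_of_lt hx)

lemma integrableOn_reflect {f : ℝ → ℝ} {s : Set ℝ} (h : IntegrableOn f s volume) :
    IntegrableOn (fun x => f (-x)) (Neg.neg ⁻¹' s) volume :=
  ((Measure.measurePreserving_neg volume).integrableOn_comp_preimage
    measurableEmbedding_neg).2 h

lemma integrableOn_Iio_aux {h : ℝ → ℝ} (hm : Measurable h) (h0 : ∀ x, 0 ≤ h x)
    (h1 : ∀ x, h x ≤ 1) {c p : ℝ} (hp : 1 < p)
    (hb : ∀ x : ℝ, x ≤ -1 → h x ≤ c * |x| ^ (-p)) :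
    IntegrableOn h (Iio (0:ℝ)) volume := by
  have key : IntegrableOn (fun x => h (-x)) (Ioi (0:ℝ)) volume := by
    apply integrableOn_Ioi_aux (hm.comp measurable_neg) (fun x => h0 _) (fun x => h1 _) hp
    intro x hx
    have := hb (-x) (by linarith)
    rwa [abs_neg, abs_of_nonneg (by linarith : (0:ℝ) ≤ x)] at this
  have h2 := integrableOn_reflect key
  have hpre : Neg.neg ⁻¹' (Ioi (0:ℝ)) = Iio 0 := by ext y; simp
  rw [hpre] at h2
  exact h2.congr_fun (fun x _ => by simp) measurableSet_Iio

lemma integrableOn_abs_rpow_Iic {p : ℝ} (hp : 1 < p) :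
    IntegrableOn (fun x : ℝ => |x| ^ (-p)) (Iic (-1:ℝ)) volume := by
  have h0 : IntegrableOn (fun x : ℝ => x ^ (-p)) (Ioi (1:ℝ)) volume :=
    integrableOn_Ioi_rpow_of_lt (by linarith) one_pos
  have h0' : IntegrableOn (fun x : ℝ => x ^ (-p)) (Ici (1:ℝ)) volume := by
    rwa [IntegrableOn, Measure.restrict_congr_set Ioi_ae_eq_Ici] at h0
  have h2 := integrableOn_reflect h0'
  have hpre : Neg.neg ⁻¹' (Ici (1:ℝ)) = Iic (-1) := by
    ext y; simp [le_neg]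
  rw [hpre] at h2
  refine h2.congr_fun (fun x hx => ?_) measurableSet_Iic
  rw [abs_of_nonpos (le_trans hx (by norm_num))]

lemma integral_abs_rpow_Iic (p : ℝ) :
    ∫ x in Iic (-1:ℝ), |x| ^ (-p) = ∫ x in Ioi (1:ℝ), x ^ (-p) := by
  have h := integral_comp_neg_Iic (-1:ℝ) (fun y : ℝ => y ^ (-p))
  rw [neg_neg] at h
  rw [← h]
  refine setIntegral_congr_fun measurableSet_Iic (fun x hx => ?_)
  rw [abs_of_nonpos (le_trans hx (by norm_num))]

end DRAux

namespace DRAux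

/-! ### Gaussian tail bounds -/

instance : IsProbabilityMeasure stdNormal :=
  inferInstanceAs (IsProbabilityMeasure (gaussianReal 0 1))

lemma stdNormal_Iic_le (x : ℝ) : stdNormal (Iic x) ≤ ENNReal.ofReal (rexp (1/2 + x)) := by
  rw [stdNormal, gaussianReal_apply 0 one_ne_zero]
  have hpt : ∀ y ∈ Iic x, gaussianPDF 0 1 y ≤
      ENNReal.ofReal (rexp (1/2 + x)) * gaussianPDF (-1) 1 y := by
    intro y hy
    rw [gaussianPDF, gaussianPDF, ← ENNReal.ofReal_mul (exp_nonneg _)]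
    apply ENNReal.ofReal_le_ofReal
    unfold gaussianPDFReal
    push_cast
    have hc : (0:ℝ) ≤ (√(2 * π * 1))⁻¹ := by positivity
    have hyx : y ≤ x := hy
    calc (√(2*π*1))⁻¹ * rexp (-(y-0)^2/(2*1))
        ≤ (√(2*π*1))⁻¹ * (rexp (1/2 + x) * rexp (-(y-(-1))^2/(2*1))) := by
          refine mul_le_mul_of_nonneg_left ?_ hc
          rw [← Real.exp_add]
          apply Real.exp_le_exp.2
          nlinarith
      _ = rexp (1/2+x) * ((√(2*π*1))⁻¹ * rexp (-(y-(-1))^2/(2*1))) := by ring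
  calc ∫⁻ y in Iic x, gaussianPDF 0 1 y
      ≤ ∫⁻ y in Iic x, ENNReal.ofReal (rexp (1/2+x)) * gaussianPDF (-1) 1 y :=
        setLIntegral_mono ((measurable_gaussianPDF _ _).const_mul _) hpt
    _ = ENNReal.ofReal (rexp (1/2+x)) * ∫⁻ y in Iic x, gaussianPDF (-1) 1 y :=
        lintegral_const_mul _ (measurable_gaussianPDF _ _)
    _ ≤ ENNReal.ofReal (rexp (1/2+x)) * ∫⁻ y, gaussianPDF (-1) 1 y := by
        gcongr
        exact Measure.restrict_le_self
    _ = ENNReal.ofReal (rexp (1/2+x)) := by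
        rw [lintegral_gaussianPDF_eq_one _ one_ne_zero, mul_one]

lemma stdNormal_Ioi_le (x : ℝ) : stdNormal (Ioi x) ≤ ENNReal.ofReal (rexp (1/2 - x)) := by
  rw [stdNormal, gaussianReal_apply 0 one_ne_zero]
  have hpt : ∀ y ∈ Ioi x, gaussianPDF 0 1 y ≤
      ENNReal.ofReal (rexp (1/2 - x)) * gaussianPDF 1 1 y := by
    intro y hy
    rw [gaussianPDF, gaussianPDF, ← ENNReal.ofReal_mul (exp_nonneg _)]
    apply ENNReal.ofReal_le_ofReal
    unfold gaussianPDFReal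
    push_cast
    have hc : (0:ℝ) ≤ (√(2 * π * 1))⁻¹ := by positivity
    have hyx : x ≤ y := le_of_lt hy
    calc (√(2*π*1))⁻¹ * rexp (-(y-0)^2/(2*1))
        ≤ (√(2*π*1))⁻¹ * (rexp (1/2 - x) * rexp (-(y-1)^2/(2*1))) := by
          refine mul_le_mul_of_nonneg_left ?_ hc
          rw [← Real.exp_add]
          apply Real.exp_le_exp.2
          nlinarith
      _ = rexp (1/2-x) * ((√(2*π*1))⁻¹ * rexp (-(y-1)^2/(2*1))) := by ring
  calc ∫⁻ y in Ioi x, gaussianPDF 0 1 y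
      ≤ ∫⁻ y in Ioi x, ENNReal.ofReal (rexp (1/2-x)) * gaussianPDF 1 1 y :=
        setLIntegral_mono ((measurable_gaussianPDF _ _).const_mul _) hpt
    _ = ENNReal.ofReal (rexp (1/2-x)) * ∫⁻ y in Ioi x, gaussianPDF 1 1 y :=
        lintegral_const_mul _ (measurable_gaussianPDF _ _)
    _ ≤ ENNReal.ofReal (rexp (1/2-x)) * ∫⁻ y, gaussianPDF 1 1 y := by
        gcongr
        exact Measure.restrict_le_self
    _ = ENNReal.ofReal (rexp (1/2-x)) := by
        rw [lintegral_gaussianPDF_eq_one _ one_ne_zero, mul_one]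

lemma weight_exp_bd {lam : ℝ} (hlam : 0 < lam) :
    ∃ M : ℝ, 0 < M ∧ ∀ u : ℝ, 0 ≤ u → (1 + u ^ lam) * rexp (1/2 - u) ≤ M := by
  set n := ⌈lam⌉₊ with hn
  refine ⟨rexp (1/2) * (2 + (n.factorial : ℝ)), by positivity, fun u hu => ?_⟩
  have h1 : u ^ lam ≤ 1 + u ^ n := by
    rcases le_total u 1 with h | h
    · have := Real.rpow_le_one hu h hlam.le
      nlinarith [pow_nonneg hu n]
    · have h2 : u ^ lam ≤ u ^ (n:ℝ) :=
        Real.rpow_le_rpow_of_exponent_le h (Nat.le_ceil lam)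
      rw [Real.rpow_natCast] at h2
      linarith
  have h2 : u ^ n ≤ (n.factorial : ℝ) * rexp u := by
    have hs : u^n / (n.factorial : ℝ) ≤ rexp u :=
      le_trans (Finset.single_le_sum (f := fun i => u^i / (i.factorial : ℝ))
        (fun i _ => by positivity) (Finset.self_mem_range_succ n))
        (Real.sum_le_exp_of_nonneg hu _)
    rw [div_le_iff₀ (by positivity)] at hs
    nlinarith
  have h3 : u ^ n * rexp (-u) ≤ (n.factorial : ℝ) := by
    calc u^n * rexp (-u) ≤ ((n.factorial : ℝ) * rexp u) * rexp (-u) :=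
          mul_le_mul_of_nonneg_right h2 (exp_nonneg _)
      _ = (n.factorial : ℝ) := by rw [mul_assoc, ← Real.exp_add]; simp
  have he : rexp (1/2 - u) = rexp (1/2) * rexp (-u) := by
    rw [← Real.exp_add]; ring_nf
  have hexpu : rexp (-u) ≤ 1 := by
    rw [show (1:ℝ) = rexp 0 by simp]
    exact Real.exp_le_exp.2 (by linarith)
  rw [he]
  have hnn : 0 ≤ u ^ lam := Real.rpow_nonneg hu lam
  nlinarith [exp_pos (1/2:ℝ), exp_nonneg (-u), mul_le_mul_of_nonneg_left h3 (exp_pos (1/2:ℝ)).le,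
    mul_le_mul_of_nonneg_left hexpu (exp_pos (1/2:ℝ)).le,
    mul_le_mul_of_nonneg_right h1 (exp_nonneg (-u))]

lemma stdNormal_bd {lam : ℝ} (hlam : 0 < lam) :
    ∃ D : ℝ, 0 ≤ D ∧ ∀ x : ℝ,
      |distFun stdNormal x - distFun (Measure.dirac 0) x| * (1 + |x| ^ lam) ≤ D := by
  obtain ⟨M, hM0, hM⟩ := weight_exp_bd hlam
  refine ⟨M, hM0.le, fun x => ?_⟩
  rcases lt_or_ge x 0 with hx | hx
  · rw [distFun_dirac, if_neg (by linarith), sub_zero,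
      abs_of_nonneg (distFun_nonneg _ _), abs_of_neg hx]
    have h1 : distFun stdNormal x ≤ rexp (1/2 + x) :=
      ENNReal.toReal_le_of_le_ofReal (exp_nonneg _) (stdNormal_Iic_le x)
    have h2 := hM (-x) (by linarith)
    have h3 : rexp (1/2 + x) = rexp (1/2 - (-x)) := by ring_nf
    calc distFun stdNormal x * (1 + (-x)^lam)
        ≤ rexp (1/2+x) * (1 + (-x)^lam) := by
          refine mul_le_mul_of_nonneg_right h1 ?_
          have := Real.rpow_nonneg (by linarith : (0:ℝ) ≤ -x) lam
          linarith
      _ = (1 + (-x)^lam) * rexp (1/2 - (-x)) := by rw [h3]; ring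
      _ ≤ M := h2
  · rw [distFun_dirac, if_pos hx]
    have hone : distFun stdNormal x + (stdNormal (Ioi x)).toReal = 1 := by
      rw [distFun, ← ENNReal.toReal_add (measure_ne_top _ _) (measure_ne_top _ _),
        ← measure_union (Set.Iic_disjoint_Ioi le_rfl) measurableSet_Ioi,
        Set.Iic_union_Ioi, measure_univ, ENNReal.toReal_one]
    have h1 : 1 - distFun stdNormal x ≤ rexp (1/2 - x) := by
      have := ENNReal.toReal_le_of_le_ofReal (exp_nonneg _) (stdNormal_Ioi_le x)
      linarith
    have h2 := hM x hx
    rw [abs_sub_comm, abs_of_nonneg (by linarith [distFun_le_one stdNormal x] : (0:ℝ) ≤ 1 - distFun stdNormal x), abs_of_nonneg hx]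
    calc (1 - distFun stdNormal x) * (1 + x^lam)
        ≤ rexp (1/2 - x) * (1 + x^lam) := by
          refine mul_le_mul_of_nonneg_right h1 ?_
          have := Real.rpow_nonneg hx lam
          linarith
      _ = (1 + x^lam) * rexp (1/2 - x) := by ring
      _ ≤ M := h2

lemma stdNormal_mem {lam : ℝ} (hlam : 0 < lam) : stdNormal ∈ Mlam lam := by
  obtain ⟨D, hD0, hD⟩ := stdNormal_bd hlam
  exact ⟨inferInstance, lt_of_le_of_lt (kolDist_le_ofReal hD) ENNReal.ofReal_lt_top⟩

end DRAux

namespace DRAux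

/-! ### part (a): integrability -/

lemma tail_neg {lam : ℝ} {𝔪 : Measure ℝ} [IsProbabilityMeasure 𝔪] {d : ℝ}
    (hd : ∀ x, |distFun 𝔪 x - distFun (Measure.dirac 0) x| * (1 + |x| ^ lam) ≤ d)
    {x : ℝ} (hx : x ≤ -1) : distFun 𝔪 x ≤ d * |x| ^ (-lam) := by
  have h1 : (1:ℝ) ≤ |x| := by rw [abs_of_nonpos (by linarith)]; linarith
  have hpow : (0:ℝ) < |x| ^ lam := Real.rpow_pos_of_pos (by linarith) lam
  have h2 := hd x
  rw [distFun_dirac, if_neg (by linarith : ¬ (0:ℝ) ≤ x), sub_zero,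
    abs_of_nonneg (distFun_nonneg _ _)] at h2
  have h3 : distFun 𝔪 x * |x| ^ lam ≤ d := by nlinarith [distFun_nonneg 𝔪 x]
  rw [Real.rpow_neg (abs_nonneg x), ← div_eq_mul_inv]
  exact (le_div_iff₀ hpow).2 h3

lemma tail_pos {lam : ℝ} {𝔪 : Measure ℝ} [IsProbabilityMeasure 𝔪] {d : ℝ}
    (hd : ∀ x, |distFun 𝔪 x - distFun (Measure.dirac 0) x| * (1 + |x| ^ lam) ≤ d)
    {x : ℝ} (hx : 1 ≤ x) : 1 - distFun 𝔪 x ≤ d * x ^ (-lam) := by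
  have hx0 : (0:ℝ) < x := by linarith
  have hpow : (0:ℝ) < x ^ lam := Real.rpow_pos_of_pos hx0 lam
  have h2 := hd x
  rw [distFun_dirac, if_pos (by linarith : (0:ℝ) ≤ x), abs_sub_comm,
    abs_of_nonneg (by linarith [distFun_le_one 𝔪 x] : (0:ℝ) ≤ 1 - distFun 𝔪 x),
    abs_of_nonneg hx0.le] at h2
  have h3 : (1 - distFun 𝔪 x) * x ^ lam ≤ d := by
    nlinarith [distFun_le_one 𝔪 x]
  rw [Real.rpow_neg hx0.le, ← div_eq_mul_inv]
  exact (le_div_iff₀ hpow).2 h3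

variable {g : ℝ → ℝ} {L β lam : ℝ}

lemma partA (hg_mono : MonotoneOn g (Icc 0 1)) (hg_conv : ConvexOn ℝ (Icc 0 1) g)
    (hg0 : g 0 = 0) (hg1 : g 1 = 1) (hL : 0 < L) (hβ : 0 < β)
    (hdom : ∀ t ∈ Set.Icc (0 : ℝ) 1, 1 - g t ≤ L * (1 - t) ^ β)
    (hlam : 0 < lam) (hlb : 1 < lam * β) {𝔪 : Measure ℝ} (h𝔪 : 𝔪 ∈ Mlam lam) :
    IntegrableOn (fun x => g (distFun 𝔪 x)) (Iio 0) volume ∧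
    IntegrableOn (fun x => 1 - g (distFun 𝔪 x)) (Ioi 0) volume := by
  obtain ⟨hprob, hfin⟩ := h𝔪
  haveI := hprob
  have hβ1 : β ≤ 1 := beta_le_one hg_conv hg0 hg1 hL hβ hdom
  have hlam1 : 1 < lam := by nlinarith
  have hd := le_kolDist_toReal hfin.ne
  set d := (kolDist lam 𝔪 (Measure.dirac 0)).toReal with hdd
  have hd0 : 0 ≤ d := ENNReal.toReal_nonneg
  have hFmem : ∀ x, distFun 𝔪 x ∈ Icc (0:ℝ) 1 := distFun_mem 𝔪
  have hmono : Monotone (fun x => g (distFun 𝔪 x)) :=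
    fun x y hxy => hg_mono (hFmem x) (hFmem y) (distFun_mono 𝔪 hxy)
  have hg01 : ∀ x, g (distFun 𝔪 x) ∈ Icc (0:ℝ) 1 :=
    fun x => g_mem hg_mono hg0 hg1 (hFmem x)
  constructor
  · apply integrableOn_Iio_aux hmono.measurable (fun x => (hg01 x).1)
      (fun x => (hg01 x).2) hlam1
    intro x hx
    calc g (distFun 𝔪 x) ≤ distFun 𝔪 x := g_le_self hg_conv hg0 hg1 (hFmem x)
      _ ≤ d * |x| ^ (-lam) := tail_neg hd hx
  · apply integrableOn_Ioi_aux (measurable_const.sub hmono.measurable)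
      (fun x => by show 0 ≤ 1 - g (distFun 𝔪 x); linarith [(hg01 x).2])
      (fun x => by show 1 - g (distFun 𝔪 x) ≤ 1; linarith [(hg01 x).1]) hlb
    intro x hx
    have h1 := tail_pos hd hx
    have hx0 : (0:ℝ) ≤ x := by linarith
    calc 1 - g (distFun 𝔪 x) ≤ L * (1 - distFun 𝔪 x) ^ β := hdom _ (hFmem x)
      _ ≤ L * (d * x ^ (-lam)) ^ β := by
          refine mul_le_mul_of_nonneg_left ?_ hL.le
          exact Real.rpow_le_rpow (by linarith [(hFmem x).2]) h1 hβ.le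
      _ = (L * d ^ β) * x ^ (-(lam * β)) := by
          rw [Real.mul_rpow hd0 (Real.rpow_nonneg hx0 _), ← Real.rpow_mul hx0, neg_mul]
          ring

end DRAux

namespace DRAux

/-! ### part (b): affine equivariance -/

variable {g : ℝ → ℝ} {L β lam : ℝ}

lemma distRisk_dirac (hg0 : g 0 = 0) (hg1 : g 1 = 1) (b : ℝ) :
    distRisk g (Measure.dirac b) = b := by
  have hgF : ∀ x, g (distFun (Measure.dirac b) x) = if b ≤ x then 1 else 0 := by
    intro x
    rw [distFun_dirac]
    by_cases h : b ≤ x <;> simp [h, hg0, hg1]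
  rw [distRisk]
  rcases le_or_gt 0 b with hb | hb
  · have h1 : ∫ x in Iio (0:ℝ), g (distFun (Measure.dirac b) x) = 0 := by
      rw [setIntegral_congr_fun measurableSet_Iio
        (fun x hx => by
          show g (distFun (Measure.dirac b) x) = (0:ℝ)
          rw [hgF, if_neg (by simp only [mem_Iio] at hx; linarith)] :
          EqOn (fun x => g (distFun (Measure.dirac b) x)) (fun _ => (0:ℝ)) (Iio 0))]
      simp
    have h2 : ∫ x in Ioi (0:ℝ), (1 - g (distFun (Measure.dirac b) x)) = b := by
      have key : EqOn (fun x => 1 - g (distFun (Measure.dirac b) x))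
          (Set.indicator (Iio b) (fun _ => (1:ℝ))) (Ioi 0) := by
        intro x _
        show 1 - g (distFun (Measure.dirac b) x) = _
        rw [hgF]
        by_cases h : b ≤ x
        · rw [if_pos h, Set.indicator_of_notMem (by simp [not_lt.2 h])]
          ring
        · rw [if_neg h, Set.indicator_of_mem (mem_Iio.2 (not_le.1 h))]
          ring
      rw [setIntegral_congr_fun measurableSet_Ioi key,
        setIntegral_indicator measurableSet_Iio, Set.Ioi_inter_Iio,
        setIntegral_const, measureReal_def, Real.volume_Ioo, ENNReal.toReal_ofReal (by linarith : (0:ℝ) ≤ b - 0),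
        smul_eq_mul, mul_one]
      ring
    rw [h1, h2]; ring
  · have h1 : ∫ x in Iio (0:ℝ), g (distFun (Measure.dirac b) x) = -b := by
      have key : EqOn (fun x => g (distFun (Measure.dirac b) x))
          (Set.indicator (Ici b) (fun _ => (1:ℝ))) (Iio 0) := by
        intro x _
        show g (distFun (Measure.dirac b) x) = _
        rw [hgF]
        by_cases h : b ≤ x
        · rw [if_pos h, Set.indicator_of_mem (mem_Ici.2 h)]
        · rw [if_neg h, Set.indicator_of_notMem (by simp [h])]
      have hset : Iio (0:ℝ) ∩ Ici b = Ico b 0 := by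
        ext y; simp [mem_Ico, and_comm]
      rw [setIntegral_congr_fun measurableSet_Iio key,
        setIntegral_indicator measurableSet_Ici, hset, setIntegral_const, measureReal_def,
        Real.volume_Ico, ENNReal.toReal_ofReal (by linarith : (0:ℝ) ≤ 0 - b),
        smul_eq_mul, mul_one]
      ring
    have h2 : ∫ x in Ioi (0:ℝ), (1 - g (distFun (Measure.dirac b) x)) = 0 := by
      rw [setIntegral_congr_fun measurableSet_Ioi
        (fun x hx => by
          show 1 - g (distFun (Measure.dirac b) x) = (0:ℝ)
          rw [hgF, if_pos (by simp only [mem_Ioi] at hx; linarith)]; ring :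
          EqOn (fun x => 1 - g (distFun (Measure.dirac b) x)) (fun _ => (0:ℝ)) (Ioi 0))]
      simp
    rw [h1, h2]; ring

lemma partB (hg_mono : MonotoneOn g (Icc 0 1)) (hg_conv : ConvexOn ℝ (Icc 0 1) g)
    (hg0 : g 0 = 0) (hg1 : g 1 = 1) (hL : 0 < L) (hβ : 0 < β)
    (hdom : ∀ t ∈ Set.Icc (0 : ℝ) 1, 1 - g t ≤ L * (1 - t) ^ β)
    (hlam : 0 < lam) (hlb : 1 < lam * β) {𝔪 : Measure ℝ} (h𝔪 : 𝔪 ∈ Mlam lam)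
    (a b : ℝ) (ha : 0 ≤ a) :
    distRisk g (Measure.map (fun x => a * x + b) 𝔪) = a * distRisk g 𝔪 + b := by
  have hprob := h𝔪.1
  haveI := hprob
  rcases ha.eq_or_lt with rfl | ha'
  · have hconst : (fun x : ℝ => 0 * x + b) = fun _ => b := by funext x; ring
    rw [hconst, Measure.map_const, measure_univ, one_smul, distRisk_dirac hg0 hg1]
    ring
  -- now 0 < a
  obtain ⟨intF1, intF2⟩ := partA hg_mono hg_conv hg0 hg1 hL hβ hdom hlam hlb h𝔪
  set c : ℝ := -b / a with hc
  have hφ : Measurable (fun x : ℝ => a * x + b) :=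
    (measurable_id.const_mul a).add_const b
  have hFT : ∀ x, distFun (Measure.map (fun x => a * x + b) 𝔪) x
      = distFun 𝔪 ((x - b) / a) := by
    intro x
    rw [distFun, distFun, Measure.map_apply hφ measurableSet_Iic]
    congr 2
    ext u
    simp only [mem_preimage, mem_Iic]
    rw [le_div_iff₀ ha']
    constructor <;> intro h <;> nlinarith
  have hFmem : ∀ x, distFun 𝔪 x ∈ Icc (0:ℝ) 1 := distFun_mem 𝔪
  have hmono : Monotone (fun x => g (distFun 𝔪 x)) :=
    fun x y hxy => hg_mono (hFmem x) (hFmem y) (distFun_mono 𝔪 hxy)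
  have hg01 : ∀ x, g (distFun 𝔪 x) ∈ Icc (0:ℝ) 1 :=
    fun x => g_mem hg_mono hg0 hg1 (hFmem x)
  have hbddF : ∀ s : Set ℝ, volume s ≠ ⊤ →
      IntegrableOn (fun x => g (distFun 𝔪 x)) s volume :=
    fun s hs => integrableOn_of_bounded hs hmono.measurable
      (fun x => (hg01 x).1) (fun x => (hg01 x).2)
  have hbddG : ∀ s : Set ℝ, volume s ≠ ⊤ →
      IntegrableOn (fun x => 1 - g (distFun 𝔪 x)) s volume :=
    fun s hs => integrableOn_of_bounded hs (measurable_const.sub hmono.measurable)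
      (fun x => by linarith [(hg01 x).2]) (fun x => by linarith [(hg01 x).1])
  -- substitution identities
  have sub1 : ∫ x in Iio (0:ℝ), g (distFun (Measure.map (fun x => a * x + b) 𝔪) x)
      = a * ∫ x in Iio c, g (distFun 𝔪 x) := by
    have e0 : ∀ x : ℝ, g (distFun (Measure.map (fun x => a * x + b) 𝔪) x)
        = g (distFun 𝔪 ((x - b) / a)) := fun x => by rw [hFT]
    calc ∫ x in Iio (0:ℝ), g (distFun (Measure.map (fun x => a * x + b) 𝔪) x)
        = ∫ x in Iio (0:ℝ), g (distFun 𝔪 ((x - b) / a)) := by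
          exact setIntegral_congr_fun measurableSet_Iio (fun x _ => e0 x)
      _ = ∫ x, Set.indicator (Iio (0:ℝ)) (fun x => g (distFun 𝔪 ((x - b) / a))) x := by
          rw [integral_indicator measurableSet_Iio]
      _ = ∫ x, Set.indicator (Iio c) (fun u => g (distFun 𝔪 u)) ((x - b) / a) := by
          congr 1
          funext x
          by_cases hx : x < 0
          · rw [Set.indicator_of_mem (mem_Iio.2 hx), Set.indicator_of_mem]
            rw [mem_Iio, hc, div_lt_div_iff_of_pos_right ha']
            linarith
          · rw [Set.indicator_of_notMem (by simpa using hx), Set.indicator_of_notMem]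
            rw [mem_Iio, hc, div_lt_div_iff_of_pos_right ha']
            push_neg at hx ⊢
            linarith
      _ = ∫ x, (fun y => Set.indicator (Iio c) (fun u => g (distFun 𝔪 u)) (y / a)) (x - b) := by
          rfl
      _ = ∫ y, Set.indicator (Iio c) (fun u => g (distFun 𝔪 u)) (y / a) :=
          integral_sub_right_eq_self (μ := volume)
            (fun y => Set.indicator (Iio c) (fun u => g (distFun 𝔪 u)) (y / a)) b
      _ = |a| • ∫ u, Set.indicator (Iio c) (fun u => g (distFun 𝔪 u)) u :=
          Measure.integral_comp_div _ a
      _ = a * ∫ x in Iio c, g (distFun 𝔪 x) := by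
          rw [integral_indicator measurableSet_Iio, abs_of_pos ha', smul_eq_mul]
  have sub2 : ∫ x in Ioi (0:ℝ), (1 - g (distFun (Measure.map (fun x => a * x + b) 𝔪) x))
      = a * ∫ x in Ioi c, (1 - g (distFun 𝔪 x)) := by
    calc ∫ x in Ioi (0:ℝ), (1 - g (distFun (Measure.map (fun x => a * x + b) 𝔪) x))
        = ∫ x in Ioi (0:ℝ), (1 - g (distFun 𝔪 ((x - b) / a))) := by
          exact setIntegral_congr_fun measurableSet_Ioi (fun x _ => by rw [hFT])
      _ = ∫ x, Set.indicator (Ioi (0:ℝ)) (fun x => 1 - g (distFun 𝔪 ((x - b) / a))) x := by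
          rw [integral_indicator measurableSet_Ioi]
      _ = ∫ x, Set.indicator (Ioi c) (fun u => 1 - g (distFun 𝔪 u)) ((x - b) / a) := by
          congr 1
          funext x
          by_cases hx : 0 < x
          · rw [Set.indicator_of_mem (mem_Ioi.2 hx), Set.indicator_of_mem]
            rw [mem_Ioi, hc, div_lt_div_iff_of_pos_right ha']
            linarith
          · rw [Set.indicator_of_notMem (by simpa using hx), Set.indicator_of_notMem]
            rw [mem_Ioi, hc, div_lt_div_iff_of_pos_right ha']
            push_neg at hx ⊢
            linarith
      _ = ∫ x, (fun y => Set.indicator (Ioi c) (fun u => 1 - g (distFun 𝔪 u)) (y / a)) (x - b) := by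
          rfl
      _ = ∫ y, Set.indicator (Ioi c) (fun u => 1 - g (distFun 𝔪 u)) (y / a) :=
          integral_sub_right_eq_self (μ := volume)
            (fun y => Set.indicator (Ioi c) (fun u => 1 - g (distFun 𝔪 u)) (y / a)) b
      _ = |a| • ∫ u, Set.indicator (Ioi c) (fun u => 1 - g (distFun 𝔪 u)) u :=
          Measure.integral_comp_div _ a
      _ = a * ∫ x in Ioi c, (1 - g (distFun 𝔪 x)) := by
          rw [integral_indicator measurableSet_Ioi, abs_of_pos ha', smul_eq_mul]
  have hac : a * c = -b := by
    rw [hc]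
    field_simp
  rw [distRisk, distRisk, sub1, sub2]
  rcases le_or_gt c 0 with hc0 | hc0
  · have e1 : ∫ x in Iio (0:ℝ), g (distFun 𝔪 x)
        = (∫ x in Iio c, g (distFun 𝔪 x)) + ∫ x in Ico c 0, g (distFun 𝔪 x) := by
      rw [← Iio_union_Ico_eq_Iio hc0,
        setIntegral_union ((Set.Iio_disjoint_Ici le_rfl).mono_right Set.Ico_subset_Ici_self)
          measurableSet_Ico (intF1.mono_set (Iio_subset_Iio hc0))
          (hbddF _ (by simp [Real.volume_Ico]))]
    have e2 : ∫ x in Ioi c, (1 - g (distFun 𝔪 x))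
        = (∫ x in Ioc c 0, (1 - g (distFun 𝔪 x))) + ∫ x in Ioi (0:ℝ), (1 - g (distFun 𝔪 x)) := by
      rw [← Ioc_union_Ioi_eq_Ioi hc0,
        setIntegral_union (Set.Ioc_disjoint_Ioi le_rfl) measurableSet_Ioi
          (hbddG _ (by simp [Real.volume_Ioc])) intF2]
    have e3 : ∫ x in Ico c 0, g (distFun 𝔪 x) = ∫ x in Ioc c 0, g (distFun 𝔪 x) := by
      rw [Measure.restrict_congr_set Ico_ae_eq_Ioc]
    have e4 : ∫ x in Ioc c 0, (1 - g (distFun 𝔪 x))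
        = (0 - c) - ∫ x in Ioc c 0, g (distFun 𝔪 x) := by
      rw [integral_sub (integrableOn_const (C := (1:ℝ)) (by simp [Real.volume_Ioc]))
        (hbddF _ (by simp [Real.volume_Ioc])), setIntegral_const, measureReal_def,
        Real.volume_Ioc, ENNReal.toReal_ofReal (by linarith : (0:ℝ) ≤ 0 - c),
        smul_eq_mul, mul_one]
    rw [e1, e2, e3, e4]
    linear_combination -hac
  · have e1 : ∫ x in Iio c, g (distFun 𝔪 x)
        = (∫ x in Iio (0:ℝ), g (distFun 𝔪 x)) + ∫ x in Ico 0 c, g (distFun 𝔪 x) := by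
      rw [← Iio_union_Ico_eq_Iio hc0.le,
        setIntegral_union ((Set.Iio_disjoint_Ici le_rfl).mono_right Set.Ico_subset_Ici_self)
          measurableSet_Ico intF1 (hbddF _ (by simp [Real.volume_Ico]))]
    have e2 : ∫ x in Ioi (0:ℝ), (1 - g (distFun 𝔪 x))
        = (∫ x in Ioc 0 c, (1 - g (distFun 𝔪 x))) + ∫ x in Ioi c, (1 - g (distFun 𝔪 x)) := by
      rw [← Ioc_union_Ioi_eq_Ioi hc0.le,
        setIntegral_union (Set.Ioc_disjoint_Ioi le_rfl) measurableSet_Ioi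
          (hbddG _ (by simp [Real.volume_Ioc]))
          (intF2.mono_set (Ioi_subset_Ioi hc0.le))]
    have e3 : ∫ x in Ico 0 c, g (distFun 𝔪 x) = ∫ x in Ioc 0 c, g (distFun 𝔪 x) := by
      rw [Measure.restrict_congr_set Ico_ae_eq_Ioc]
    have e4 : ∫ x in Ioc 0 c, (1 - g (distFun 𝔪 x))
        = (c - 0) - ∫ x in Ioc 0 c, g (distFun 𝔪 x) := by
      rw [integral_sub (integrableOn_const (C := (1:ℝ)) (by simp [Real.volume_Ioc]))
        (hbddF _ (by simp [Real.volume_Ioc])), setIntegral_const, measureReal_def,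
        Real.volume_Ioc, ENNReal.toReal_ofReal (by linarith : (0:ℝ) ≤ c - 0),
        smul_eq_mul, mul_one]
    rw [e1, e2, e3, e4]
    linear_combination -hac

end DRAux

namespace DRAux

/-! ### part (d): Hölder-type stability -/

variable {g : ℝ → ℝ} {L β lam : ℝ}

lemma partD (hg_mono : MonotoneOn g (Icc 0 1)) (hg_conv : ConvexOn ℝ (Icc 0 1) g)
    (hg0 : g 0 = 0) (hg1 : g 1 = 1) (hL : 0 < L) (hβ : 0 < β)
    (hdom : ∀ t ∈ Set.Icc (0 : ℝ) 1, 1 - g t ≤ L * (1 - t) ^ β)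
    (hlam : 0 < lam) (hlb : 1 < lam * β) :
    ∃ C : ℝ, 0 < C ∧ ∀ 𝔪 ∈ Mlam lam,
      |distRisk g 𝔪 - distRisk g stdNormal| ≤
        C * (kolDist lam 𝔪 stdNormal).toReal ^ β := by
  set p := lam * β with hp
  set K := ∫ x in Ioi (1:ℝ), x ^ (-p) with hK
  have hK0 : 0 ≤ K :=
    setIntegral_nonneg measurableSet_Ioi
      (fun x hx => Real.rpow_nonneg (by linarith [mem_Ioi.1 hx] : (0:ℝ) ≤ x) _)
  refine ⟨2 * L * (1 + K), by nlinarith, fun 𝔪 h𝔪 => ?_⟩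
  have hprob := h𝔪.1
  have hfin := h𝔪.2
  haveI := hprob
  obtain ⟨intF1, intF2⟩ := partA hg_mono hg_conv hg0 hg1 hL hβ hdom hlam hlb h𝔪
  obtain ⟨intG1, intG2⟩ := partA hg_mono hg_conv hg0 hg1 hL hβ hdom hlam hlb (stdNormal_mem hlam)
  obtain ⟨D, hD0, hD⟩ := stdNormal_bd hlam
  have hd𝔪 := le_kolDist_toReal hfin.ne
  have htri : ∀ x, |distFun 𝔪 x - distFun stdNormal x| * (1 + |x| ^ lam)
      ≤ (kolDist lam 𝔪 (Measure.dirac 0)).toReal + D := by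
    intro x
    have h1 := hd𝔪 x
    have h2 := hD x
    have habs : |distFun 𝔪 x - distFun stdNormal x|
        ≤ |distFun 𝔪 x - distFun (Measure.dirac 0) x|
          + |distFun stdNormal x - distFun (Measure.dirac 0) x| := by
      have := abs_sub_le (distFun 𝔪 x) (distFun (Measure.dirac 0) x) (distFun stdNormal x)
      rwa [abs_sub_comm (distFun (Measure.dirac 0) x)] at this
    calc |distFun 𝔪 x - distFun stdNormal x| * (1 + |x| ^ lam)
        ≤ (|distFun 𝔪 x - distFun (Measure.dirac 0) x|
            + |distFun stdNormal x - distFun (Measure.dirac 0) x|) * (1 + |x| ^ lam) :=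
          mul_le_mul_of_nonneg_right habs (weight_pos lam x).le
      _ = |distFun 𝔪 x - distFun (Measure.dirac 0) x| * (1 + |x| ^ lam)
            + |distFun stdNormal x - distFun (Measure.dirac 0) x| * (1 + |x| ^ lam) := by ring
      _ ≤ (kolDist lam 𝔪 (Measure.dirac 0)).toReal + D := add_le_add h1 h2
  have hfinN : kolDist lam 𝔪 stdNormal ≠ ⊤ :=
    ((kolDist_le_ofReal htri).trans_lt ENNReal.ofReal_lt_top).ne
  set d := (kolDist lam 𝔪 stdNormal).toReal with hdd
  have hd0 : 0 ≤ d := ENNReal.toReal_nonneg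
  have hFG := le_kolDist_toReal hfinN
  have hFmem : ∀ x, distFun 𝔪 x ∈ Icc (0:ℝ) 1 := distFun_mem 𝔪
  have hGmem : ∀ x, distFun stdNormal x ∈ Icc (0:ℝ) 1 := distFun_mem stdNormal
  have hholder : ∀ x, |g (distFun stdNormal x) - g (distFun 𝔪 x)|
      ≤ L * |distFun stdNormal x - distFun 𝔪 x| ^ β :=
    fun x => g_holder hg_mono hg_conv hg0 hg1 hL hβ hdom (hFmem x) (hGmem x)
  have hb1 : ∀ x, |g (distFun stdNormal x) - g (distFun 𝔪 x)| ≤ L * d ^ β := by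
    intro x
    have hle : |distFun stdNormal x - distFun 𝔪 x| ≤ d := by
      have h := hFG x
      have hw1 : 1 ≤ 1 + |x| ^ lam := by
        have := Real.rpow_nonneg (abs_nonneg x) lam; linarith
      rw [abs_sub_comm]
      nlinarith [abs_nonneg (distFun 𝔪 x - distFun stdNormal x)]
    exact (hholder x).trans (mul_le_mul_of_nonneg_left
      (Real.rpow_le_rpow (abs_nonneg _) hle hβ.le) hL.le)
  have hb2 : ∀ x : ℝ, 1 ≤ |x| →
      |g (distFun stdNormal x) - g (distFun 𝔪 x)| ≤ (L * d ^ β) * |x| ^ (-p) := by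
    intro x hx1
    have hxpos : (0:ℝ) < |x| := by linarith
    have h1 : |distFun stdNormal x - distFun 𝔪 x| * |x| ^ lam ≤ d := by
      have h := hFG x
      rw [abs_sub_comm] at h
      nlinarith [abs_nonneg (distFun stdNormal x - distFun 𝔪 x)]
    have h2 : |distFun stdNormal x - distFun 𝔪 x| ≤ d * |x| ^ (-lam) := by
      rw [Real.rpow_neg (abs_nonneg x), ← div_eq_mul_inv]
      exact (le_div_iff₀ (Real.rpow_pos_of_pos hxpos lam)).2 h1
    calc |g (distFun stdNormal x) - g (distFun 𝔪 x)|
        ≤ L * |distFun stdNormal x - distFun 𝔪 x| ^ β := hholder x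
      _ ≤ L * (d * |x| ^ (-lam)) ^ β :=
          mul_le_mul_of_nonneg_left
            (Real.rpow_le_rpow (abs_nonneg _) h2 hβ.le) hL.le
      _ = (L * d ^ β) * |x| ^ (-p) := by
          rw [Real.mul_rpow hd0 (Real.rpow_nonneg (abs_nonneg x) _),
            ← Real.rpow_mul (abs_nonneg x), neg_mul]
          ring
  -- decomposition of the difference
  have eA : ∫ x in Iio (0:ℝ), (g (distFun stdNormal x) - g (distFun 𝔪 x))
      = (∫ x in Iio (0:ℝ), g (distFun stdNormal x)) - ∫ x in Iio (0:ℝ), g (distFun 𝔪 x) :=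
    integral_sub intG1 intF1
  have eB : ∫ x in Ioi (0:ℝ), (g (distFun stdNormal x) - g (distFun 𝔪 x))
      = (∫ x in Ioi (0:ℝ), (1 - g (distFun 𝔪 x))) - ∫ x in Ioi (0:ℝ), (1 - g (distFun stdNormal x)) := by
    rw [← integral_sub intF2 intG2]
    exact integral_congr_ae (Eventually.of_forall fun x => by ring)
  have hsplit : distRisk g 𝔪 - distRisk g stdNormal =
      (∫ x in Iio (0:ℝ), (g (distFun stdNormal x) - g (distFun 𝔪 x)))
      + ∫ x in Ioi (0:ℝ), (g (distFun stdNormal x) - g (distFun 𝔪 x)) := by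
    rw [distRisk, distRisk, eA, eB]; ring
  have hintd1 : IntegrableOn (fun x => |g (distFun stdNormal x) - g (distFun 𝔪 x)|)
      (Iio 0) volume := (intG1.sub intF1).abs
  have hintd2 : IntegrableOn (fun x => |g (distFun stdNormal x) - g (distFun 𝔪 x)|)
      (Ioi 0) volume := by
    have h := intF2.sub intG2
    exact (h.congr (ae_of_all _ fun x => by simp only [Pi.sub_apply]; ring)).abs
  have habs : |distRisk g 𝔪 - distRisk g stdNormal| ≤
      (∫ x in Iio (0:ℝ), |g (distFun stdNormal x) - g (distFun 𝔪 x)|)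
      + ∫ x in Ioi (0:ℝ), |g (distFun stdNormal x) - g (distFun 𝔪 x)| := by
    have key : ∀ s : Set ℝ,
        |∫ x in s, (g (distFun stdNormal x) - g (distFun 𝔪 x))|
          ≤ ∫ x in s, |g (distFun stdNormal x) - g (distFun 𝔪 x)| := fun s => by
      simpa [Real.norm_eq_abs] using norm_integral_le_integral_norm
        (μ := volume.restrict s) (fun x => g (distFun stdNormal x) - g (distFun 𝔪 x))
    rw [hsplit]
    exact (abs_add_le _ _).trans (add_le_add (key _) (key _))
  -- measurability of the difference
  have hg01F : ∀ x, g (distFun 𝔪 x) ∈ Icc (0:ℝ) 1 :=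
    fun x => g_mem hg_mono hg0 hg1 (hFmem x)
  have hg01G : ∀ x, g (distFun stdNormal x) ∈ Icc (0:ℝ) 1 :=
    fun x => g_mem hg_mono hg0 hg1 (hGmem x)
  have hmonoF : Monotone (fun x => g (distFun 𝔪 x)) :=
    fun x y hxy => hg_mono (hFmem x) (hFmem y) (distFun_mono 𝔪 hxy)
  have hmonoG : Monotone (fun x => g (distFun stdNormal x)) :=
    fun x y hxy => hg_mono (hGmem x) (hGmem y) (distFun_mono stdNormal hxy)
  have hmeasF : Measurable (fun x => g (distFun 𝔪 x)) := hmonoF.measurable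
  have hmeasG : Measurable (fun x => g (distFun stdNormal x)) := hmonoG.measurable
  have hmeasD : Measurable (fun x => |g (distFun stdNormal x) - g (distFun 𝔪 x)|) :=
    (hmeasG.sub hmeasF).abs
  have hDbd : ∀ x, |g (distFun stdNormal x) - g (distFun 𝔪 x)| ≤ 1 := by
    intro x
    rw [abs_sub_le_iff]
    constructor <;> linarith [(hg01F x).1, (hg01F x).2, (hg01G x).1, (hg01G x).2]
  -- left side bound
  have hL1 : ∫ x in Iio (0:ℝ), |g (distFun stdNormal x) - g (distFun 𝔪 x)|
      ≤ L * d ^ β * K + L * d ^ β := by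
    have hres : (volume : Measure ℝ).restrict (Iio 0) = volume.restrict (Iic 0) :=
      Measure.restrict_congr_set Iio_ae_eq_Iic
    have hsplit1 : ∫ x in Iio (0:ℝ), |g (distFun stdNormal x) - g (distFun 𝔪 x)|
        = (∫ x in Iic (-1:ℝ), |g (distFun stdNormal x) - g (distFun 𝔪 x)|)
          + ∫ x in Ioc (-1:ℝ) 0, |g (distFun stdNormal x) - g (distFun 𝔪 x)| := by
      rw [hres, ← Set.Iic_union_Ioc_eq_Iic (by norm_num : (-1:ℝ) ≤ 0),
        setIntegral_union (Set.Iic_disjoint_Ioc le_rfl) measurableSet_Ioc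
          (hintd1.mono_set (Set.Iic_subset_Iio.mpr (by norm_num)))
          (integrableOn_of_bounded (by simp [Real.volume_Ioc]) hmeasD
            (fun x => abs_nonneg _) hDbd)]
    rw [hsplit1]
    have hpiece1 : ∫ x in Iic (-1:ℝ), |g (distFun stdNormal x) - g (distFun 𝔪 x)|
        ≤ L * d ^ β * K := by
      calc ∫ x in Iic (-1:ℝ), |g (distFun stdNormal x) - g (distFun 𝔪 x)|
          ≤ ∫ x in Iic (-1:ℝ), (L * d ^ β) * |x| ^ (-p) := by
            refine setIntegral_mono_on
              (hintd1.mono_set (Set.Iic_subset_Iio.mpr (by norm_num)))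
              ((integrableOn_abs_rpow_Iic hlb).const_mul _) measurableSet_Iic ?_
            intro x hx
            refine hb2 x ?_
            rw [abs_of_nonpos (le_trans hx (by norm_num))]
            have : x ≤ -1 := hx
            linarith
        _ = (L * d ^ β) * ∫ x in Iic (-1:ℝ), |x| ^ (-p) := integral_const_mul _ _
        _ = L * d ^ β * K := by rw [integral_abs_rpow_Iic, hK]
    have hpiece2 : ∫ x in Ioc (-1:ℝ) 0, |g (distFun stdNormal x) - g (distFun 𝔪 x)|
        ≤ L * d ^ β := by
      calc ∫ x in Ioc (-1:ℝ) 0, |g (distFun stdNormal x) - g (distFun 𝔪 x)|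
          ≤ ∫ _x in Ioc (-1:ℝ) 0, (L * d ^ β) := by
            refine setIntegral_mono_on
              (integrableOn_of_bounded (by simp [Real.volume_Ioc]) hmeasD
                (fun x => abs_nonneg _) hDbd)
              (integrableOn_const (C := L * d ^ β) (by simp [Real.volume_Ioc])) measurableSet_Ioc ?_
            intro x _
            exact hb1 x
        _ = L * d ^ β := by
            rw [setIntegral_const, measureReal_def, Real.volume_Ioc, smul_eq_mul,
              ENNReal.toReal_ofReal (by norm_num : (0:ℝ) ≤ 0 - (-1))]
            norm_num
    linarith
  -- right side bound
  have hR1 : ∫ x in Ioi (0:ℝ), |g (distFun stdNormal x) - g (distFun 𝔪 x)|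
      ≤ L * d ^ β + L * d ^ β * K := by
    have hsplit2 : ∫ x in Ioi (0:ℝ), |g (distFun stdNormal x) - g (distFun 𝔪 x)|
        = (∫ x in Ioc (0:ℝ) 1, |g (distFun stdNormal x) - g (distFun 𝔪 x)|)
          + ∫ x in Ioi (1:ℝ), |g (distFun stdNormal x) - g (distFun 𝔪 x)| := by
      rw [← Ioc_union_Ioi_eq_Ioi (zero_le_one (α := ℝ)),
        setIntegral_union (Set.Ioc_disjoint_Ioi le_rfl) measurableSet_Ioi
          (integrableOn_of_bounded (by simp [Real.volume_Ioc]) hmeasD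
            (fun x => abs_nonneg _) hDbd)
          (hintd2.mono_set (Ioi_subset_Ioi zero_le_one))]
    rw [hsplit2]
    have hrint : IntegrableOn (fun x : ℝ => (L * d ^ β) * |x| ^ (-p)) (Ioi 1) volume := by
      refine IntegrableOn.congr_fun
        ((integrableOn_Ioi_rpow_of_lt (a := -p) (by linarith) one_pos).const_mul (L * d ^ β))
        ?_ measurableSet_Ioi
      intro x hx
      show (L * d ^ β) * x ^ (-p) = (L * d ^ β) * |x| ^ (-p)
      rw [abs_of_pos (by linarith [mem_Ioi.1 hx] : (0:ℝ) < x)]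
    have hpiece1 : ∫ x in Ioc (0:ℝ) 1, |g (distFun stdNormal x) - g (distFun 𝔪 x)|
        ≤ L * d ^ β := by
      calc ∫ x in Ioc (0:ℝ) 1, |g (distFun stdNormal x) - g (distFun 𝔪 x)|
          ≤ ∫ _x in Ioc (0:ℝ) 1, (L * d ^ β) := by
            refine setIntegral_mono_on
              (integrableOn_of_bounded (by simp [Real.volume_Ioc]) hmeasD
                (fun x => abs_nonneg _) hDbd)
              (integrableOn_const (C := L * d ^ β) (by simp [Real.volume_Ioc])) measurableSet_Ioc ?_
            intro x _
            exact hb1 x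
        _ = L * d ^ β := by
            rw [setIntegral_const, measureReal_def, Real.volume_Ioc, smul_eq_mul,
              ENNReal.toReal_ofReal (by norm_num : (0:ℝ) ≤ 1 - 0)]
            norm_num
    have hpiece2 : ∫ x in Ioi (1:ℝ), |g (distFun stdNormal x) - g (distFun 𝔪 x)|
        ≤ L * d ^ β * K := by
      calc ∫ x in Ioi (1:ℝ), |g (distFun stdNormal x) - g (distFun 𝔪 x)|
          ≤ ∫ x in Ioi (1:ℝ), (L * d ^ β) * |x| ^ (-p) := by
            refine setIntegral_mono_on (hintd2.mono_set (Ioi_subset_Ioi zero_le_one))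
              hrint measurableSet_Ioi ?_
            intro x hx
            refine hb2 x ?_
            rw [abs_of_pos (by linarith [mem_Ioi.1 hx] : (0:ℝ) < x)]
            exact le_of_lt hx
        _ = (L * d ^ β) * ∫ x in Ioi (1:ℝ), |x| ^ (-p) := integral_const_mul _ _
        _ = L * d ^ β * K := by
            rw [hK]
            congr 1
            refine setIntegral_congr_fun measurableSet_Ioi (fun x hx => ?_)
            rw [abs_of_pos (by linarith [mem_Ioi.1 hx] : (0:ℝ) < x)]
    linarith
  calc |distRisk g 𝔪 - distRisk g stdNormal|
      ≤ (∫ x in Iio (0:ℝ), |g (distFun stdNormal x) - g (distFun 𝔪 x)|)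
        + ∫ x in Ioi (0:ℝ), |g (distFun stdNormal x) - g (distFun 𝔪 x)| := habs
    _ ≤ (L * d ^ β * K + L * d ^ β) + (L * d ^ β + L * d ^ β * K) := add_le_add hL1 hR1
    _ = 2 * L * (1 + K) * d ^ β := by ring

end DRAux


/-- Lemma 3.1: a convex distortion function with `1 - g(t) ≤ L(1-t)^β` yields a distortion
risk functional satisfying conditions (c) and (d) for every `λ > 0` with `λβ > 1`. -/
theorem distortion_risk_conditions
    (g : ℝ → ℝ) (hg_mono : MonotoneOn g (Set.Icc 0 1))
    (hg_conv : ConvexOn ℝ (Set.Icc 0 1) g)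
    (hg0 : g 0 = 0) (hg1 : g 1 = 1)
    (L β : ℝ) (hL : 0 < L) (hβ : 0 < β)
    (hdom : ∀ t ∈ Set.Icc (0 : ℝ) 1, 1 - g t ≤ L * (1 - t) ^ β)
    (lam : ℝ) (hlam : 0 < lam) (hlb : 1 < lam * β) :
    (∀ 𝔪 ∈ Mlam lam,
      IntegrableOn (fun x => g (distFun 𝔪 x)) (Set.Iio 0) volume ∧
      IntegrableOn (fun x => 1 - g (distFun 𝔪 x)) (Set.Ioi 0) volume) ∧
    (∀ 𝔪 ∈ Mlam lam, ∀ a b : ℝ, 0 ≤ a →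
      distRisk g (Measure.map (fun x => a * x + b) 𝔪) = a * distRisk g 𝔪 + b) ∧
    (∃ C : ℝ, 0 < C ∧ ∀ 𝔪 ∈ Mlam lam,
      |distRisk g 𝔪 - distRisk g stdNormal| ≤
        C * (kolDist lam 𝔪 stdNormal).toReal ^ β) := by
  refine ⟨fun 𝔪 h𝔪 => DRAux.partA hg_mono hg_conv hg0 hg1 hL hβ hdom hlam hlb h𝔪,
    fun 𝔪 h𝔪 a b ha => DRAux.partB hg_mono hg_conv hg0 hg1 hL hβ hdom hlam hlb h𝔪 a b ha,
    DRAux.partD hg_mono hg_conv hg0 hg1 hL hβ hdom hlam hlb⟩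
end
end

section
/- Let g : [0,1] → [0,1] be convex and nondecreasing with g(0) = 0 and g(1) = 1, and suppose there exist constants L, β > 0 such that 1 − g(t) ≤ L·(1 − t)^β for all t ∈ [0,1]. Then |g(t) − g(t′)| ≤ L·|t − t′|^β for all t, t′ ∈ [0,1]. -/
open MeasureTheory ProbabilityTheory Filter
open scoped ENNReal NNReal Topology

noncomputable section

/-- A convex distortion function with `1 - g(t) ≤ L(1-t)^β` is `β`-Hölder with constant `L`. -/
theorem convex_distortion_holder
    (g : ℝ → ℝ) (hg_mono : MonotoneOn g (Set.Icc 0 1))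
    (hg_conv : ConvexOn ℝ (Set.Icc 0 1) g)
    (hg0 : g 0 = 0) (hg1 : g 1 = 1)
    (L β : ℝ) (hL : 0 < L) (hβ : 0 < β)
    (hdom : ∀ t ∈ Set.Icc (0 : ℝ) 1, 1 - g t ≤ L * (1 - t) ^ β) :
    ∀ t ∈ Set.Icc (0 : ℝ) 1, ∀ t' ∈ Set.Icc (0 : ℝ) 1,
      |g t - g t'| ≤ L * |t - t'| ^ β := by
  -- key one-sided estimate
  have key : ∀ t ∈ Set.Icc (0 : ℝ) 1, ∀ t' ∈ Set.Icc (0 : ℝ) 1, t ≤ t' →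
      g t' - g t ≤ L * (t' - t) ^ β := by
    intro t ht t' ht' htt
    rcases eq_or_lt_of_le htt with rfl | hlt
    · simp [Real.zero_rpow hβ.ne']
    · set u : ℝ := 1 - (t' - t) with hu
      have ht1 : t ∈ Set.Icc (0 : ℝ) 1 := ht
      have hu_mem : u ∈ Set.Icc (0 : ℝ) 1 := by
        constructor
        · simp only [hu]; linarith [ht.1, ht'.2]
        · simp only [hu]; linarith [hlt]
      have h1mem : (1 : ℝ) ∈ Set.Icc (0 : ℝ) 1 := by constructor <;> norm_num
      have hne1 : t' ≠ t := ne_of_gt hlt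
      have hne2 : (1 : ℝ) ≠ t := by
        intro h; have := ht'.2; linarith
      have h1 : (g t' - g t) / (t' - t) ≤ (g 1 - g t) / (1 - t) :=
        hg_conv.secant_mono ht ht' h1mem hne1 hne2 ht'.2
      have htu : t ≤ u := by simp only [hu]; linarith [ht'.2]
      have hune : u ≠ 1 := by simp only [hu]; intro h; nlinarith
      have htne : t ≠ 1 := by intro h; linarith [ht'.2]
      have h2 : (g t - g 1) / (t - 1) ≤ (g u - g 1) / (u - 1) :=
        hg_conv.secant_mono h1mem ht1 hu_mem htne hune htu
      have heq : (g t - g 1) / (t - 1) = (g 1 - g t) / (1 - t) := by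
        rw [← neg_div_neg_eq]; ring_nf
      have heq2 : (g u - g 1) / (u - 1) = (1 - g u) / (t' - t) := by
        rw [hg1, ← neg_div_neg_eq]; congr 1 <;> simp [hu] <;> ring
      have h3 : (g t' - g t) / (t' - t) ≤ (1 - g u) / (t' - t) := by
        rw [← heq2]; exact h1.trans (heq ▸ h2)
      have hpos : (0 : ℝ) < t' - t := by linarith
      have h4 : g t' - g t ≤ 1 - g u := by
        have := (div_le_div_iff_of_pos_right hpos).mp h3
        linarith [this]
      have h5 : 1 - g u ≤ L * (1 - u) ^ β := hdom u hu_mem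
      have h6 : (1 : ℝ) - u = t' - t := by simp [hu]
      rw [h6] at h5
      linarith
  intro t ht t' ht'
  rcases le_total t t' with h | h
  · rw [abs_of_nonpos (by linarith [hg_mono ht ht' h]), abs_of_nonpos (by linarith)]
    have := key t ht t' ht' h
    calc -(g t - g t') = g t' - g t := by ring
      _ ≤ L * (t' - t) ^ β := this
      _ = L * (-(t - t')) ^ β := by ring_nf
  · rw [abs_of_nonneg (by linarith [hg_mono ht' ht h]), abs_of_nonneg (by linarith)]
    exact key t' ht' t ht h
end
end

section
/- Let g be a distortion function satisfying |g(t) − g(t′)| ≤ L·|t − t′|^β for all t, t′ ∈ [0,1], where L, β > 0, and let λ > 0 with λβ > 1. Then C := L·∫_ℝ (1 + |x|^λ)^{−β} dx is finite, and for all 𝔪₁, 𝔪₂ ∈ M₁^λ the values R_g(𝔪₁) and R_g(𝔪₂) are finite and satisfy |R_g(𝔪₁) − R_g(𝔪₂)| ≤ ∫_ℝ |g(F₁(x)) − g(F₂(x))| dx ≤ C·d_λ(𝔪₁, 𝔪₂)^β, where F₁, F₂ are the distribution functions of 𝔪₁, 𝔪₂. -/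
open MeasureTheory ProbabilityTheory Filter
open scoped ENNReal NNReal Topology

noncomputable section

section Helpers
open Set

lemma weight_pos (lam x : ℝ) : 0 < 1 + |x| ^ lam := by positivity

lemma integrable_weight {lam β : ℝ} (hlam : 0 < lam) (hβ : 0 < β) (hlb : 1 < lam * β) :
    Integrable (fun x : ℝ => (1 + |x| ^ lam) ^ (-β)) := by
  have hcont : Continuous (fun x : ℝ => (1 + |x| ^ lam) ^ (-β)) := by
    have h1 : Continuous fun x : ℝ => 1 + |x| ^ lam :=
      continuous_const.add (continuous_abs.rpow_const fun x => Or.inr hlam.le)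
    exact h1.rpow_const fun x => Or.inl (weight_pos lam x).ne'
  have hIoi : IntegrableOn (fun x : ℝ => (1 + |x| ^ lam) ^ (-β)) (Set.Ioi 1) := by
    have hbig : IntegrableOn (fun x : ℝ => x ^ (-(lam * β))) (Set.Ioi 1) :=
      integrableOn_Ioi_rpow_of_lt (by linarith) one_pos
    apply hbig.mono' hcont.aestronglyMeasurable.restrict
    filter_upwards [ae_restrict_mem measurableSet_Ioi] with x hx
    have hx1 : (1 : ℝ) < x := hx
    have hxpos : 0 < x := lt_trans one_pos hx1
    rw [Real.norm_eq_abs, abs_of_nonneg (Real.rpow_nonneg (weight_pos lam x).le _)]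
    have h1 : x ^ lam ≤ 1 + |x| ^ lam := by
      rw [abs_of_pos hxpos]; linarith
    have h2 : (1 + |x| ^ lam) ^ (-β) ≤ (x ^ lam) ^ (-β) :=
      Real.rpow_le_rpow_of_nonpos (Real.rpow_pos_of_pos hxpos lam) h1 (by linarith)
    calc (1 + |x| ^ lam) ^ (-β) ≤ (x ^ lam) ^ (-β) := h2
      _ = x ^ (-(lam * β)) := by
          rw [← Real.rpow_mul hxpos.le]; ring_nf
  have hIcc : IntegrableOn (fun x : ℝ => (1 + |x| ^ lam) ^ (-β)) (Set.Icc (-1) 1) :=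
    hcont.integrableOn_Icc
  have hIio : IntegrableOn (fun x : ℝ => (1 + |x| ^ lam) ^ (-β)) (Set.Iio (-1)) := by
    rw [← (Measure.measurePreserving_neg (volume : Measure ℝ)).integrableOn_comp_preimage
        (Homeomorph.neg ℝ).measurableEmbedding]
    simp only [Function.comp_def, abs_neg, neg_preimage, neg_Iio, neg_neg]
    convert hIoi using 2
  have : (Set.univ : Set ℝ) = Set.Iio (-1) ∪ (Set.Icc (-1) 1 ∪ Set.Ioi 1) := by
    ext x
    simp only [Set.mem_univ, Set.mem_union, Set.mem_Iio, Set.mem_Icc, Set.mem_Ioi, true_iff]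
    by_cases h1 : x < -1
    · exact Or.inl h1
    · by_cases h2 : x ≤ 1
      · exact Or.inr (Or.inl ⟨by linarith, h2⟩)
      · exact Or.inr (Or.inr (by linarith))
  rw [← integrableOn_univ, this]
  exact hIio.union (hIcc.union hIoi)

lemma monotone_distFun (μ : Measure ℝ) [IsFiniteMeasure μ] : Monotone (distFun μ) :=
  fun _ _ hab => ENNReal.toReal_mono (measure_ne_top μ _)
    (measure_mono (Set.Iic_subset_Iic.2 hab))

lemma distFun_mem (μ : Measure ℝ) [IsProbabilityMeasure μ] (x : ℝ) :
    distFun μ x ∈ Set.Icc (0 : ℝ) 1 := by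
  constructor
  · exact ENNReal.toReal_nonneg
  · have : μ (Set.Iic x) ≤ 1 := prob_le_one
    simpa [distFun] using ENNReal.toReal_mono ENNReal.one_ne_top this

lemma kolDist_bound {lam : ℝ} {μ ν : Measure ℝ} (h : kolDist lam μ ν < ⊤) (x : ℝ) :
    |distFun μ x - distFun ν x| * (1 + |x| ^ lam) ≤ (kolDist lam μ ν).toReal := by
  have h1 : ENNReal.ofReal (|distFun μ x - distFun ν x| * (1 + |x| ^ lam)) ≤ kolDist lam μ ν :=
    le_iSup (fun x => ENNReal.ofReal (|distFun μ x - distFun ν x| * (1 + |x| ^ lam))) x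
  have h2 := ENNReal.toReal_mono h.ne h1
  rwa [ENNReal.toReal_ofReal (by positivity)] at h2

lemma kolDist_triangle (lam : ℝ) (μ ν κ : Measure ℝ) :
    kolDist lam μ ν ≤ kolDist lam μ κ + kolDist lam ν κ := by
  refine iSup_le fun x => ?_
  have habs : |distFun μ x - distFun ν x| ≤
      |distFun μ x - distFun κ x| + |distFun ν x - distFun κ x| := by
    calc |distFun μ x - distFun ν x|
        ≤ |distFun μ x - distFun κ x| + |distFun κ x - distFun ν x| := abs_sub_le _ _ _
      _ = _ := by rw [abs_sub_comm (distFun κ x)]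
  have hw : (0:ℝ) ≤ 1 + |x| ^ lam := (weight_pos lam x).le
  calc ENNReal.ofReal (|distFun μ x - distFun ν x| * (1 + |x| ^ lam))
      ≤ ENNReal.ofReal ((|distFun μ x - distFun κ x| + |distFun ν x - distFun κ x|)
          * (1 + |x| ^ lam)) :=
        ENNReal.ofReal_le_ofReal (mul_le_mul_of_nonneg_right habs hw)
    _ = ENNReal.ofReal (|distFun μ x - distFun κ x| * (1 + |x| ^ lam)) +
        ENNReal.ofReal (|distFun ν x - distFun κ x| * (1 + |x| ^ lam)) := by
        rw [add_mul, ENNReal.ofReal_add (by positivity) (by positivity)]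
    _ ≤ kolDist lam μ κ + kolDist lam ν κ :=
        add_le_add
          (le_iSup (fun x => ENNReal.ofReal (|distFun μ x - distFun κ x| * (1 + |x| ^ lam))) x)
          (le_iSup (fun x => ENNReal.ofReal (|distFun ν x - distFun κ x| * (1 + |x| ^ lam))) x)

lemma distFun_dirac (x : ℝ) : distFun (Measure.dirac 0) x = if 0 ≤ x then 1 else 0 := by
  rw [distFun, Measure.dirac_apply]
  by_cases h : (0:ℝ) ≤ x <;> simp [Set.indicator_apply, Set.mem_Iic, h]

lemma rpow_bound {β : ℝ} (hβ : 0 < β) {a w D : ℝ} (ha : 0 ≤ a) (hw : 0 < w)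
    (h : a * w ≤ D) : a ^ β ≤ D ^ β * w ^ (-β) := by
  have h1 : a ^ β * w ^ β ≤ D ^ β := by
    rw [← Real.mul_rpow ha hw.le]
    exact Real.rpow_le_rpow (by positivity) h hβ.le
  have h2 : w ^ β * w ^ (-β) = 1 := by
    rw [← Real.rpow_add hw]; simp
  calc a ^ β = a ^ β * w ^ β * w ^ (-β) := by rw [mul_assoc, h2, mul_one]
    _ ≤ D ^ β * w ^ (-β) := mul_le_mul_of_nonneg_right h1 (Real.rpow_nonneg hw.le _)

end Helpers

/-- For a `β`-Hölder distortion function `g` and `λβ > 1`, the distortion risk functional is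
finite on `M₁^λ` and is Hölder continuous w.r.t. the nonuniform Kolmogorov distance. -/
theorem holder_distortion_risk_bound
    (g : ℝ → ℝ) (hg_mono : MonotoneOn g (Set.Icc 0 1))
    (hg0 : g 0 = 0) (hg1 : g 1 = 1)
    (L β : ℝ) (hL : 0 < L) (hβ : 0 < β)
    (hHolder : ∀ t ∈ Set.Icc (0 : ℝ) 1, ∀ t' ∈ Set.Icc (0 : ℝ) 1,
      |g t - g t'| ≤ L * |t - t'| ^ β)
    (lam : ℝ) (hlam : 0 < lam) (hlb : 1 < lam * β) :
    Integrable (fun x : ℝ => (1 + |x| ^ lam) ^ (-β)) ∧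
    ∀ 𝔪₁ ∈ Mlam lam, ∀ 𝔪₂ ∈ Mlam lam,
      (IntegrableOn (fun x => g (distFun 𝔪₁ x)) (Set.Iio 0) volume ∧
        IntegrableOn (fun x => 1 - g (distFun 𝔪₁ x)) (Set.Ioi 0) volume) ∧
      (IntegrableOn (fun x => g (distFun 𝔪₂ x)) (Set.Iio 0) volume ∧
        IntegrableOn (fun x => 1 - g (distFun 𝔪₂ x)) (Set.Ioi 0) volume) ∧
      |distRisk g 𝔪₁ - distRisk g 𝔪₂| ≤ ∫ x : ℝ, |g (distFun 𝔪₁ x) - g (distFun 𝔪₂ x)| ∧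
      (∫ x : ℝ, |g (distFun 𝔪₁ x) - g (distFun 𝔪₂ x)|) ≤
        (L * ∫ x : ℝ, (1 + |x| ^ lam) ^ (-β)) * (kolDist lam 𝔪₁ 𝔪₂).toReal ^ β := by
  have hW := integrable_weight hlam hβ hlb
  refine ⟨hW, ?_⟩
  have h0mem : (0:ℝ) ∈ Set.Icc (0:ℝ) 1 := ⟨le_rfl, zero_le_one⟩
  have h1mem : (1:ℝ) ∈ Set.Icc (0:ℝ) 1 := ⟨zero_le_one, le_rfl⟩
  -- integrability of the two pieces for any measure in Mlam
  have key : ∀ 𝔪 ∈ Mlam lam,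
      IntegrableOn (fun x => g (distFun 𝔪 x)) (Set.Iio 0) volume ∧
      IntegrableOn (fun x => 1 - g (distFun 𝔪 x)) (Set.Ioi 0) volume := by
    rintro 𝔪 ⟨hprob, hfin⟩
    haveI := hprob
    set K := (kolDist lam 𝔪 (Measure.dirac 0)).toReal with hK
    have hmono : Monotone (fun x => g (distFun 𝔪 x)) := fun a b hab =>
      hg_mono (distFun_mem 𝔪 a) (distFun_mem 𝔪 b) (monotone_distFun 𝔪 hab)
    have hmeas : Measurable (fun x => g (distFun 𝔪 x)) := hmono.measurable
    have hbound : ∀ x : ℝ, |distFun 𝔪 x - distFun (Measure.dirac 0) x| ^ β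
        ≤ K ^ β * (1 + |x| ^ lam) ^ (-β) := fun x =>
      rpow_bound hβ (abs_nonneg _) (weight_pos lam x) (kolDist_bound hfin x)
    have hWint : Integrable (fun x : ℝ => L * K ^ β * ((1 + |x| ^ lam) ^ (-β))) :=
      hW.const_mul _
    constructor
    · apply hWint.integrableOn.mono' hmeas.aestronglyMeasurable.restrict
      filter_upwards [ae_restrict_mem measurableSet_Iio] with x hx
      have hx0 : ¬ (0:ℝ) ≤ x := not_le.2 hx
      have hF := distFun_mem 𝔪 x
      have hdir : distFun (Measure.dirac 0) x = 0 := by rw [distFun_dirac, if_neg hx0]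
      calc ‖g (distFun 𝔪 x)‖ = |g (distFun 𝔪 x) - g (distFun (Measure.dirac 0) x)| := by
            rw [hdir, hg0, sub_zero, Real.norm_eq_abs]
        _ ≤ L * |distFun 𝔪 x - distFun (Measure.dirac 0) x| ^ β :=
            hHolder _ hF _ (by rw [hdir]; exact h0mem)
        _ ≤ L * (K ^ β * (1 + |x| ^ lam) ^ (-β)) :=
            mul_le_mul_of_nonneg_left (hbound x) hL.le
        _ = L * K ^ β * ((1 + |x| ^ lam) ^ (-β)) := by ring
    · apply hWint.integrableOn.mono'
        ((measurable_const.sub hmeas).aestronglyMeasurable.restrict)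
      filter_upwards [ae_restrict_mem measurableSet_Ioi] with x hx
      have hx0 : (0:ℝ) ≤ x := le_of_lt hx
      have hF := distFun_mem 𝔪 x
      have hdir : distFun (Measure.dirac 0) x = 1 := by rw [distFun_dirac, if_pos hx0]
      calc ‖1 - g (distFun 𝔪 x)‖
          = |g (distFun 𝔪 x) - g (distFun (Measure.dirac 0) x)| := by
            rw [hdir, hg1, Real.norm_eq_abs, abs_sub_comm]
        _ ≤ L * |distFun 𝔪 x - distFun (Measure.dirac 0) x| ^ β :=
            hHolder _ hF _ (by rw [hdir]; exact h1mem)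
        _ ≤ L * (K ^ β * (1 + |x| ^ lam) ^ (-β)) :=
            mul_le_mul_of_nonneg_left (hbound x) hL.le
        _ = L * K ^ β * ((1 + |x| ^ lam) ^ (-β)) := by ring
  rintro 𝔪₁ hm₁ 𝔪₂ hm₂
  obtain ⟨hA1, hB1⟩ := key 𝔪₁ hm₁
  obtain ⟨hA2, hB2⟩ := key 𝔪₂ hm₂
  obtain ⟨hprob₁, hfin₁⟩ := hm₁
  obtain ⟨hprob₂, hfin₂⟩ := hm₂
  haveI := hprob₁; haveI := hprob₂
  refine ⟨⟨hA1, hB1⟩, ⟨hA2, hB2⟩, ?_, ?_⟩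
  · -- |R₁ - R₂| ≤ ∫ |g F₁ - g F₂|
    have heq : (fun x => (1 - g (distFun 𝔪₂ x)) - (1 - g (distFun 𝔪₁ x)))
        = fun x => g (distFun 𝔪₁ x) - g (distFun 𝔪₂ x) := by funext x; ring
    have hInt1 : IntegrableOn (fun x => g (distFun 𝔪₁ x) - g (distFun 𝔪₂ x))
        (Set.Iio 0) volume := hA1.sub hA2
    have hInt2 : IntegrableOn (fun x => g (distFun 𝔪₁ x) - g (distFun 𝔪₂ x))
        (Set.Ioi 0) volume := heq ▸ hB2.sub hB1
    have hIntAll : Integrable (fun x => g (distFun 𝔪₁ x) - g (distFun 𝔪₂ x)) volume := by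
      rw [← integrableOn_univ, ← Set.Iio_union_Ici (a := (0:ℝ))]
      exact hInt1.union (Iff.mpr integrableOn_Ici_iff_integrableOn_Ioi hInt2)
    have hAbs := hIntAll.abs
    have hRdiff : distRisk g 𝔪₁ - distRisk g 𝔪₂ =
        (∫ x in Set.Iio (0:ℝ), (g (distFun 𝔪₂ x) - g (distFun 𝔪₁ x))) +
        (∫ x in Set.Ioi (0:ℝ), ((1 - g (distFun 𝔪₁ x)) - (1 - g (distFun 𝔪₂ x)))) := by
      simp only [distRisk]
      rw [integral_sub hA2 hA1, integral_sub hB1 hB2]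
      ring
    calc |distRisk g 𝔪₁ - distRisk g 𝔪₂|
        ≤ |∫ x in Set.Iio (0:ℝ), (g (distFun 𝔪₂ x) - g (distFun 𝔪₁ x))| +
          |∫ x in Set.Ioi (0:ℝ), ((1 - g (distFun 𝔪₁ x)) - (1 - g (distFun 𝔪₂ x)))| := by
          rw [hRdiff]; exact abs_add_le _ _
      _ ≤ (∫ x in Set.Iio (0:ℝ), |g (distFun 𝔪₁ x) - g (distFun 𝔪₂ x)|) +
          ∫ x in Set.Ioi (0:ℝ), |g (distFun 𝔪₁ x) - g (distFun 𝔪₂ x)| := by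
          refine add_le_add ?_ ?_
          · calc |∫ x in Set.Iio (0:ℝ), (g (distFun 𝔪₂ x) - g (distFun 𝔪₁ x))|
                ≤ ∫ x in Set.Iio (0:ℝ), |g (distFun 𝔪₂ x) - g (distFun 𝔪₁ x)| := by
                  simpa [Real.norm_eq_abs] using
                    norm_integral_le_integral_norm
                      (μ := volume.restrict (Set.Iio (0:ℝ)))
                      (fun x => g (distFun 𝔪₂ x) - g (distFun 𝔪₁ x))
              _ = _ := by simp_rw [abs_sub_comm]
          · calc |∫ x in Set.Ioi (0:ℝ), ((1 - g (distFun 𝔪₁ x)) - (1 - g (distFun 𝔪₂ x)))|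
                ≤ ∫ x in Set.Ioi (0:ℝ),
                    |(1 - g (distFun 𝔪₁ x)) - (1 - g (distFun 𝔪₂ x))| := by
                  simpa [Real.norm_eq_abs] using
                    norm_integral_le_integral_norm
                      (μ := volume.restrict (Set.Ioi (0:ℝ)))
                      (fun x => (1 - g (distFun 𝔪₁ x)) - (1 - g (distFun 𝔪₂ x)))
              _ = _ := by
                  congr 1; funext x
                  rw [show (1 - g (distFun 𝔪₁ x)) - (1 - g (distFun 𝔪₂ x))
                      = g (distFun 𝔪₂ x) - g (distFun 𝔪₁ x) from by ring, abs_sub_comm]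
      _ = ∫ x in (Set.Iio (0:ℝ) ∪ Set.Ioi (0:ℝ)),
            |g (distFun 𝔪₁ x) - g (distFun 𝔪₂ x)| :=
          (setIntegral_union ((Set.Iio_disjoint_Ici le_rfl).mono_right Set.Ioi_subset_Ici_self) measurableSet_Ioi
            hAbs.integrableOn hAbs.integrableOn).symm
      _ ≤ ∫ x : ℝ, |g (distFun 𝔪₁ x) - g (distFun 𝔪₂ x)| := by
          apply setIntegral_le_integral hAbs
          filter_upwards with x using abs_nonneg _
  · -- Hölder bound
    set D := (kolDist lam 𝔪₁ 𝔪₂).toReal with hD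
    have hfin12 : kolDist lam 𝔪₁ 𝔪₂ < ⊤ :=
      lt_of_le_of_lt (kolDist_triangle lam 𝔪₁ 𝔪₂ (Measure.dirac 0))
        (ENNReal.add_lt_top.2 ⟨hfin₁, hfin₂⟩)
    have hb : ∀ x : ℝ, |g (distFun 𝔪₁ x) - g (distFun 𝔪₂ x)|
        ≤ L * D ^ β * ((1 + |x| ^ lam) ^ (-β)) := by
      intro x
      calc |g (distFun 𝔪₁ x) - g (distFun 𝔪₂ x)|
          ≤ L * |distFun 𝔪₁ x - distFun 𝔪₂ x| ^ β :=
            hHolder _ (distFun_mem 𝔪₁ x) _ (distFun_mem 𝔪₂ x)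
        _ ≤ L * (D ^ β * (1 + |x| ^ lam) ^ (-β)) :=
            mul_le_mul_of_nonneg_left
              (rpow_bound hβ (abs_nonneg _) (weight_pos lam x) (kolDist_bound hfin12 x)) hL.le
        _ = L * D ^ β * ((1 + |x| ^ lam) ^ (-β)) := by ring
    calc (∫ x : ℝ, |g (distFun 𝔪₁ x) - g (distFun 𝔪₂ x)|)
        ≤ ∫ x : ℝ, L * D ^ β * ((1 + |x| ^ lam) ^ (-β)) := by
          apply integral_mono_of_nonneg
          · filter_upwards with x using abs_nonneg _
          · exact hW.const_mul _
          · filter_upwards with x using hb x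
      _ = (L * ∫ x : ℝ, (1 + |x| ^ lam) ^ (-β)) * D ^ β := by
          rw [integral_const_mul]; ring
end
end

section
/- Let p ≥ 1 and a ∈ (0, 1]. The one-sided p-th moment risk measure ρ(X) := E[X] + a·(E[((X − E[X])⁺)^p])^{1/p}, defined for real-valued random variables X with E[|X|^p] < ∞ on a probability space, is a coherent risk measure: it is monotone (X ≤ Y a.s. implies ρ(X) ≤ ρ(Y)), cash additive (ρ(X + b) = ρ(X) + b for all b ∈ ℝ), subadditive (ρ(X + Y) ≤ ρ(X) + ρ(Y)), and positively homogeneous (ρ(cX) = c·ρ(X) for all c ≥ 0). -/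
open MeasureTheory ProbabilityTheory Filter
open scoped ENNReal NNReal Topology

noncomputable section

/-- The one-sided `p`-th moment risk measure `ρ(X) = E[X] + a·E[((X-E[X])⁺)^p]^{1/p}`. -/
def osRisk {Ω : Type*} [MeasurableSpace Ω] (P : Measure Ω) (p a : ℝ) (X : Ω → ℝ) : ℝ :=
  (∫ ω, X ω ∂P) + a * (∫ ω, (max (X ω - ∫ ω', X ω' ∂P) 0) ^ p ∂P) ^ (1 / p)

lemma osRisk_eq_eLpNorm {Ω : Type*} [MeasurableSpace Ω] (P : Measure Ω) [IsProbabilityMeasure P]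
    {p : ℝ} (a : ℝ) (hp : 1 ≤ p) (X : Ω → ℝ) (hX : MemLp X (ENNReal.ofReal p) P) :
    osRisk P p a X = (∫ ω, X ω ∂P) +
      a * (eLpNorm (fun ω => max (X ω - ∫ ω', X ω' ∂P) 0) (ENNReal.ofReal p) P).toReal := by
  have hp0 : (0 : ℝ) < p := lt_of_lt_of_le one_pos hp
  have q0 : (ENNReal.ofReal p) ≠ 0 := by simp only [ne_eq, ENNReal.ofReal_eq_zero, not_le]; linarith
  have qt : (ENNReal.ofReal p) ≠ ⊤ := ENNReal.ofReal_ne_top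
  set m := ∫ ω', X ω' ∂P
  have hf : MemLp (fun ω => max (X ω - m) 0) (ENNReal.ofReal p) P :=
    (hX.sub (memLp_const m)).pos_part
  rw [osRisk, hf.eLpNorm_eq_integral_rpow_norm q0 qt, ENNReal.toReal_ofReal hp0.le,
    ENNReal.toReal_ofReal (by positivity), one_div]
  have key : ∀ ω, ‖max (X ω - m) 0‖ ^ p = (max (X ω - m) 0) ^ p := fun ω => by
    rw [Real.norm_of_nonneg (le_max_right _ _)]
  simp only [key]
  rfl

/-- Example 3.3: the one-sided `p`-th moment risk measure is monotone, cash additive,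
subadditive and positively homogeneous on `L^p`. -/
theorem oneSided_moment_coherent
    {Ω : Type*} [MeasurableSpace Ω] (P : Measure Ω) [IsProbabilityMeasure P]
    (p a : ℝ) (hp : 1 ≤ p) (ha : a ∈ Set.Ioc (0 : ℝ) 1) :
    (∀ X Y : Ω → ℝ, MemLp X (ENNReal.ofReal p) P → MemLp Y (ENNReal.ofReal p) P →
      (∀ᵐ ω ∂P, X ω ≤ Y ω) → osRisk P p a X ≤ osRisk P p a Y) ∧
    (∀ X : Ω → ℝ, MemLp X (ENNReal.ofReal p) P → ∀ b : ℝ,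
      osRisk P p a (fun ω => X ω + b) = osRisk P p a X + b) ∧
    (∀ X Y : Ω → ℝ, MemLp X (ENNReal.ofReal p) P → MemLp Y (ENNReal.ofReal p) P →
      osRisk P p a (fun ω => X ω + Y ω) ≤ osRisk P p a X + osRisk P p a Y) ∧
    (∀ X : Ω → ℝ, MemLp X (ENNReal.ofReal p) P → ∀ c : ℝ, 0 ≤ c →
      osRisk P p a (fun ω => c * X ω) = c * osRisk P p a X) := by
  obtain ⟨ha0, ha1⟩ := ha
  have hp0 : (0 : ℝ) < p := lt_of_lt_of_le one_pos hp
  have q0 : (ENNReal.ofReal p) ≠ 0 := by simp only [ne_eq, ENNReal.ofReal_eq_zero, not_le]; linarith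
  have qt : (ENNReal.ofReal p) ≠ ⊤ := ENNReal.ofReal_ne_top
  have hq1 : (1 : ℝ≥0∞) ≤ ENNReal.ofReal p := by
    rw [← ENNReal.ofReal_one]; exact ENNReal.ofReal_le_ofReal hp
  refine ⟨?_, ?_, ?_, ?_⟩
  · -- monotone
    intro X Y hX hY hle
    have hXi := hX.integrable hq1
    have hYi := hY.integrable hq1
    set m := ∫ ω', X ω' ∂P with hm
    set n := ∫ ω', Y ω' ∂P with hn
    have hmn : m ≤ n := integral_mono_ae hXi hYi hle
    set e := n - m with he_def
    have he : 0 ≤ e := by simp only [he_def, sub_nonneg]; exact hmn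
    set fX := fun ω => max (X ω - m) 0 with hfXdef
    set fY := fun ω => max (Y ω - n) 0 with hfYdef
    have hfX : MemLp fX (ENNReal.ofReal p) P := (hX.sub (memLp_const m)).pos_part
    have hfY : MemLp fY (ENNReal.ofReal p) P := (hY.sub (memLp_const n)).pos_part
    have hpt : ∀ᵐ ω ∂P, ‖fX ω‖ ≤ ‖fY ω + e‖ := by
      filter_upwards [hle] with ω h
      have h0 : (0:ℝ) ≤ fY ω := le_max_right _ _
      rw [Real.norm_of_nonneg (le_max_right _ _), Real.norm_of_nonneg (by linarith)]
      have h1 : X ω - m ≤ (Y ω - n) + e := by simp only [he_def]; linarith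
      calc max (X ω - m) 0 ≤ max ((Y ω - n) + e) 0 := max_le_max h1 le_rfl
        _ ≤ max (Y ω - n) 0 + e := by
            apply max_le _ (by positivity)
            exact add_le_add (le_max_left _ _) le_rfl
    have h1 : eLpNorm fX (ENNReal.ofReal p) P ≤
        eLpNorm (fun ω => fY ω + e) (ENNReal.ofReal p) P := eLpNorm_mono_ae hpt
    have h2 : eLpNorm (fun ω => fY ω + e) (ENNReal.ofReal p) P ≤
        eLpNorm fY (ENNReal.ofReal p) P + eLpNorm (fun _ : Ω => e) (ENNReal.ofReal p) P :=
      eLpNorm_add_le hfY.aestronglyMeasurable aestronglyMeasurable_const hq1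
    have hfinY : eLpNorm fY (ENNReal.ofReal p) P ≠ ⊤ := hfY.2.ne
    have hfinC : eLpNorm (fun _ : Ω => e) (ENNReal.ofReal p) P ≠ ⊤ :=
      (memLp_const e).2.ne
    have hconst : (eLpNorm (fun _ : Ω => e) (ENNReal.ofReal p) P).toReal = e := by
      rw [eLpNorm_const e q0 (IsProbabilityMeasure.ne_zero P)]
      simp [Real.norm_of_nonneg he]
    have hto : (eLpNorm fX (ENNReal.ofReal p) P).toReal ≤
        (eLpNorm fY (ENNReal.ofReal p) P).toReal + e := by
      have h3 := ENNReal.toReal_mono (by simp [hfinY, hfinC]) (h1.trans h2)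
      rwa [ENNReal.toReal_add hfinY hfinC, hconst] at h3
    rw [osRisk_eq_eLpNorm P a hp X hX, osRisk_eq_eLpNorm P a hp Y hY]
    have h4 : a * (eLpNorm fX (ENNReal.ofReal p) P).toReal ≤
        a * ((eLpNorm fY (ENNReal.ofReal p) P).toReal + e) :=
      mul_le_mul_of_nonneg_left hto ha0.le
    have h5 : a * e ≤ 1 * e := mul_le_mul_of_nonneg_right ha1 he
    simp only [← hm, ← hn, ← hfXdef, ← hfYdef]
    nlinarith
  · -- cash additive
    intro X hX b
    have hXi := hX.integrable hq1
    have hm : ∫ ω, (X ω + b) ∂P = (∫ ω, X ω ∂P) + b := by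
      rw [integral_add hXi (integrable_const b), integral_const]; simp
    rw [osRisk, osRisk, hm]
    have hpt : ∀ ω, X ω + b - ((∫ ω', X ω' ∂P) + b) = X ω - ∫ ω', X ω' ∂P := fun ω => by ring
    simp only [hpt]
    ring
  · -- subadditive
    intro X Y hX hY
    have hXi := hX.integrable hq1
    have hYi := hY.integrable hq1
    set m := ∫ ω', X ω' ∂P with hm
    set n := ∫ ω', Y ω' ∂P with hn
    have hsum : ∫ ω', (X ω' + Y ω') ∂P = m + n := integral_add hXi hYi
    set fX := fun ω => max (X ω - m) 0 with hfXdef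
    set fY := fun ω => max (Y ω - n) 0 with hfYdef
    set fS := fun ω => max (X ω + Y ω - (m + n)) 0 with hfSdef
    have hfX : MemLp fX (ENNReal.ofReal p) P := (hX.sub (memLp_const m)).pos_part
    have hfY : MemLp fY (ENNReal.ofReal p) P := (hY.sub (memLp_const n)).pos_part
    have hpt : ∀ ω, ‖fS ω‖ ≤ ‖fX ω + fY ω‖ := by
      intro ω
      have h0X : (0:ℝ) ≤ fX ω := le_max_right _ _
      have h0Y : (0:ℝ) ≤ fY ω := le_max_right _ _
      rw [Real.norm_of_nonneg (le_max_right _ _), Real.norm_of_nonneg (by positivity)]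
      apply max_le _ (by positivity)
      have hx : X ω - m ≤ fX ω := le_max_left _ _
      have hy : Y ω - n ≤ fY ω := le_max_left _ _
      linarith
    have h1 : eLpNorm fS (ENNReal.ofReal p) P ≤
        eLpNorm (fun ω => fX ω + fY ω) (ENNReal.ofReal p) P := eLpNorm_mono hpt
    have h2 : eLpNorm (fun ω => fX ω + fY ω) (ENNReal.ofReal p) P ≤
        eLpNorm fX (ENNReal.ofReal p) P + eLpNorm fY (ENNReal.ofReal p) P :=
      eLpNorm_add_le hfX.aestronglyMeasurable hfY.aestronglyMeasurable hq1
    have hfinX : eLpNorm fX (ENNReal.ofReal p) P ≠ ⊤ := hfX.2.ne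
    have hfinY : eLpNorm fY (ENNReal.ofReal p) P ≠ ⊤ := hfY.2.ne
    have hto : (eLpNorm fS (ENNReal.ofReal p) P).toReal ≤
        (eLpNorm fX (ENNReal.ofReal p) P).toReal +
        (eLpNorm fY (ENNReal.ofReal p) P).toReal := by
      have h3 := ENNReal.toReal_mono (by simp [hfinX, hfinY]) (h1.trans h2)
      rwa [ENNReal.toReal_add hfinX hfinY] at h3
    rw [osRisk_eq_eLpNorm P a hp (fun ω => X ω + Y ω) (hX.add hY), osRisk_eq_eLpNorm P a hp X hX,
      osRisk_eq_eLpNorm P a hp Y hY]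
    simp only [hsum, ← hm, ← hn, ← hfXdef, ← hfYdef, ← hfSdef]
    nlinarith [mul_le_mul_of_nonneg_left hto ha0.le]
  · -- positively homogeneous
    intro X hX c hc
    have hm : ∫ ω, c * X ω ∂P = c * ∫ ω, X ω ∂P := integral_const_mul c X
    rw [osRisk, osRisk, hm]
    have hpt : ∀ ω, (max (c * X ω - c * ∫ ω', X ω' ∂P) 0) ^ p =
        c ^ p * (max (X ω - ∫ ω', X ω' ∂P) 0) ^ p := fun ω => by
      rw [← mul_sub, show max (c * (X ω - ∫ ω', X ω' ∂P)) 0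
            = c * max (X ω - ∫ ω', X ω' ∂P) 0 by
          rw [mul_max_of_nonneg _ _ hc, mul_zero],
        Real.mul_rpow hc (le_max_right _ _)]
    simp only [hpt]
    rw [integral_const_mul, Real.mul_rpow (by positivity)
        (integral_nonneg fun ω => by positivity),
      ← Real.rpow_mul hc, mul_one_div, div_self hp0.ne', Real.rpow_one]
    ring
end
end

section
/- Let α ∈ [1/2, 1) and q ∈ [0, 1], and let B be a Bernoulli random variable with P(B = 1) = q and P(B = 0) = 1 − q. Then the function m ↦ α·E[((B − m)⁺)²] + (1 − α)·E[((m − B)⁺)²] on ℝ attains its minimum at the unique point m* = αq / (αq + (1 − α)(1 − q)). Equivalently, for the expectile-based risk measure ρ at level α, the function g_ρ(t) := 1 − ρ(B_{1−t}) satisfies g_ρ(t) = (1 − α)t / (1 − α + (1 − t)(2α − 1)), and consequently 1 − g_ρ(t) ≤ (α/(1 − α))·(1 − t) for all t ∈ [0,1]. -/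
open MeasureTheory ProbabilityTheory Filter
open scoped ENNReal NNReal Topology

noncomputable section

/-- The Bernoulli distribution on ℝ with expectation `q`. -/
def bern (q : ℝ) : Measure ℝ :=
  ENNReal.ofReal (1 - q) • Measure.dirac 0 + ENNReal.ofReal q • Measure.dirac 1

/-- The expectile loss function `m ↦ α·E[((B-m)⁺)²] + (1-α)·E[((m-B)⁺)²]`. -/
def expectileLoss {Ω : Type*} [MeasurableSpace Ω] (P : Measure Ω) (α : ℝ) (B : Ω → ℝ)
    (m : ℝ) : ℝ :=
  α * ∫ ω, (max (B ω - m) 0) ^ 2 ∂P + (1 - α) * ∫ ω, (max (m - B ω) 0) ^ 2 ∂P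

lemma integrable_dirac_meas {f : ℝ → ℝ} (hf : Measurable f) (a : ℝ) :
    Integrable f (Measure.dirac a) := by
  refine ⟨hf.aestronglyMeasurable, ?_⟩
  rw [HasFiniteIntegral, lintegral_dirac]
  exact ENNReal.coe_lt_top

lemma integral_bern (q : ℝ) (hq0 : 0 ≤ q) (hq1 : q ≤ 1) {g : ℝ → ℝ} (hg : Measurable g) :
    ∫ x, g x ∂(bern q) = (1 - q) * g 0 + q * g 1 := by
  unfold bern
  rw [integral_add_measure
      (((integrable_dirac_meas hg 0)).smul_measure ENNReal.ofReal_ne_top)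
      (((integrable_dirac_meas hg 1)).smul_measure ENNReal.ofReal_ne_top),
    integral_smul_measure, integral_smul_measure, integral_dirac, integral_dirac,
    ENNReal.toReal_ofReal (by linarith), ENNReal.toReal_ofReal hq0]
  simp [mul_comm]

lemma loss_eq {Ω : Type*} [MeasurableSpace Ω] (P : Measure Ω) [IsProbabilityMeasure P]
    (α : ℝ) (q : ℝ) (hq : q ∈ Set.Icc (0 : ℝ) 1)
    (B : Ω → ℝ) (hB : Measurable B) (hBlaw : Measure.map B P = bern q) (m : ℝ) :
    expectileLoss P α B m =
      α * ((1 - q) * (max (-m) 0) ^ 2 + q * (max (1 - m) 0) ^ 2) +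
      (1 - α) * ((1 - q) * (max m 0) ^ 2 + q * (max (m - 1) 0) ^ 2) := by
  have hg1 : Measurable (fun x : ℝ => (max (x - m) 0) ^ 2) := by fun_prop
  have hg2 : Measurable (fun x : ℝ => (max (m - x) 0) ^ 2) := by fun_prop
  have h1 : ∫ ω, (max (B ω - m) 0) ^ 2 ∂P
      = (1 - q) * (max (0 - m) 0) ^ 2 + q * (max (1 - m) 0) ^ 2 := by
    rw [← integral_map hB.aemeasurable hg1.aestronglyMeasurable, hBlaw]
    exact integral_bern q hq.1 hq.2 hg1
  have h2 : ∫ ω, (max (m - B ω) 0) ^ 2 ∂P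
      = (1 - q) * (max (m - 0) 0) ^ 2 + q * (max (m - 1) 0) ^ 2 := by
    rw [← integral_map hB.aemeasurable hg2.aestronglyMeasurable, hBlaw]
    exact integral_bern q hq.1 hq.2 hg2
  rw [expectileLoss, h1, h2, zero_sub, sub_zero]

/-- Example 3.4: for a Bernoulli random variable `B` with parameter `q`, the expectile loss is
uniquely minimized at `m* = αq/(αq+(1-α)(1-q))`; equivalently `g_ρ(t) = (1-α)t/(1-α+(1-t)(2α-1))`
and `1 - g_ρ(t) ≤ (α/(1-α))(1-t)`. -/
theorem expectile_of_bernoulli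
    {Ω : Type*} [MeasurableSpace Ω] (P : Measure Ω) [IsProbabilityMeasure P]
    (α : ℝ) (hα : α ∈ Set.Ico (1 / 2 : ℝ) 1)
    (q : ℝ) (hq : q ∈ Set.Icc (0 : ℝ) 1)
    (B : Ω → ℝ) (hB : Measurable B) (hBlaw : Measure.map B P = bern q) :
    (∀ m : ℝ, m ≠ α * q / (α * q + (1 - α) * (1 - q)) →
      expectileLoss P α B (α * q / (α * q + (1 - α) * (1 - q))) < expectileLoss P α B m) ∧
    (∀ t ∈ Set.Icc (0 : ℝ) 1,
      1 - α * (1 - t) / (α * (1 - t) + (1 - α) * t) =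
        (1 - α) * t / (1 - α + (1 - t) * (2 * α - 1)) ∧
      1 - (1 - α) * t / (1 - α + (1 - t) * (2 * α - 1)) ≤ (α / (1 - α)) * (1 - t)) := by
  obtain ⟨hα1, hα2⟩ := hα
  obtain ⟨hq0, hq1⟩ := hq
  constructor
  · intro m hm
    set D : ℝ := α * q + (1 - α) * (1 - q) with hDdef
    have hD : 0 < D := by nlinarith
    set ms : ℝ := α * q / D with hmsdef
    have hmsD : ms * D = α * q := div_mul_cancel₀ _ hD.ne'
    have hms0 : 0 ≤ ms := div_nonneg (by nlinarith) hD.le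
    have hms1 : ms ≤ 1 := by
      rw [hmsdef, div_le_one hD]; nlinarith
    rw [loss_eq P α q ⟨hq0, hq1⟩ B hB hBlaw, loss_eq P α q ⟨hq0, hq1⟩ B hB hBlaw]
    rw [max_eq_right (by linarith : -ms ≤ 0), max_eq_left (by linarith : (0:ℝ) ≤ 1 - ms),
      max_eq_left hms0, max_eq_right (by linarith : ms - 1 ≤ 0)]
    rcases lt_or_ge m 0 with h | h
    · rw [max_eq_left (by linarith : (0:ℝ) ≤ -m), max_eq_left (by linarith : (0:ℝ) ≤ 1 - m),
        max_eq_right h.le, max_eq_right (by linarith : m - 1 ≤ 0)]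
      have h1 : 0 < (m - ms) ^ 2 := by nlinarith [mul_pos (by linarith : (0:ℝ) < -(m - ms)) (by linarith : (0:ℝ) < -(m - ms))]
      nlinarith [mul_pos hD h1, mul_nonneg (mul_nonneg (by linarith : (0:ℝ) ≤ 2 * α - 1)
        (by linarith : (0:ℝ) ≤ 1 - q)) (sq_nonneg m)]
    rcases le_or_gt m 1 with h' | h'
    · rw [max_eq_right (by linarith : -m ≤ 0), max_eq_left (by linarith : (0:ℝ) ≤ 1 - m),
        max_eq_left h, max_eq_right (by linarith : m - 1 ≤ 0)]
      have hne : m - ms ≠ 0 := sub_ne_zero.mpr hm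
      have h1 : 0 < (m - ms) ^ 2 := by positivity
      nlinarith [mul_pos hD h1]
    · rw [max_eq_right (by linarith : -m ≤ 0), max_eq_right (by linarith : 1 - m ≤ 0),
        max_eq_left (by linarith : (0:ℝ) ≤ m), max_eq_left (by linarith : (0:ℝ) ≤ m - 1)]
      have h1 : 0 < (1 - α) * ((m - 1) * (m - 1)) :=
        mul_pos (by linarith) (mul_pos (by linarith) (by linarith))
      nlinarith [mul_nonneg hD.le (sq_nonneg (1 - ms)), h1,
        mul_nonneg (mul_nonneg (by linarith : (0:ℝ) ≤ 1 - α) (by linarith : (0:ℝ) ≤ 1 - q))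
          (by nlinarith : (0:ℝ) ≤ m ^ 2 - 1 - (m - 1) ^ 2)]
  · intro t ⟨ht0, ht1⟩
    have h2 : 1 - α + (1 - t) * (2 * α - 1) = α * (1 - t) + (1 - α) * t := by ring
    have hD' : 0 < α * (1 - t) + (1 - α) * t := by nlinarith
    constructor
    · rw [h2]
      rw [eq_div_iff hD'.ne', sub_mul, div_mul_cancel₀ _ hD'.ne']; ring
    · rw [h2]
      have h3 : 1 - (1 - α) * t / (α * (1 - t) + (1 - α) * t)
          = α * (1 - t) / (α * (1 - t) + (1 - α) * t) := by
        field_simp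
        ring
      have h4 : (α / (1 - α)) * (1 - t) = α * (1 - t) / (1 - α) := by ring
      rw [h3, h4, div_le_div_iff₀ hD' (by linarith : (0:ℝ) < 1 - α)]
      nlinarith [mul_nonneg (mul_nonneg (by linarith : (0:ℝ) ≤ α) (by linarith : (0:ℝ) ≤ 1 - t))
        (mul_nonneg (by linarith : (0:ℝ) ≤ 2 * α - 1) (by linarith : (0:ℝ) ≤ 1 - t))]
end
end

section
/- Let h > 0 and let μ be a Borel probability measure on ℝ supported on the grid hℕ₀ = {0, h, 2h, …} with μ({0}) > 0. Then for every n ∈ ℕ the n-fold convolution μ^{*n} satisfies μ^{*n}({0}) = μ({0})^n and, for every integer j ≥ 1, μ^{*n}({jh}) = (1/(j·μ({0}))) · ∑_{ℓ=1}^{j} ((n + 1)ℓ − j) · μ({ℓh}) · μ^{*n}({(j − ℓ)h}). -/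
open MeasureTheory ProbabilityTheory Filter
open scoped ENNReal NNReal Topology

noncomputable section

namespace Aux


def grid (h : ℝ) : Set ℝ := {x : ℝ | ∃ j : ℕ, x = (j : ℝ) * h}

lemma grid_meas (h : ℝ) : MeasurableSet (grid h) := by
  have : grid h = Set.range (fun j : ℕ => (j : ℝ) * h) := by
    ext x; simp [grid, eq_comm]
  rw [this]
  exact (Set.countable_range _).measurableSet

lemma cast_eq_of_mul (h : ℝ) (hh : 0 < h) {a b : ℕ} (hab : (a:ℝ) * h = (b:ℝ) * h) : a = b := by
  have := mul_right_cancel₀ hh.ne' hab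
  exact_mod_cast this

lemma conv_singleton (h : ℝ) (hh : 0 < h) (ν μ : Measure ℝ)
    [IsProbabilityMeasure ν] [IsProbabilityMeasure μ]
    (hν : ν (grid h) = 1) (hμ : μ (grid h) = 1) (j : ℕ) :
    Measure.map (fun p : ℝ × ℝ => p.1 + p.2) (ν.prod μ) {(j : ℝ) * h}
      = ∑ ℓ ∈ Finset.range (j + 1), ν {(ℓ : ℝ) * h} * μ {((j - ℓ : ℕ) : ℝ) * h} := by
  rw [Measure.map_apply measurable_add (measurableSet_singleton _)]
  set S : Set (ℝ × ℝ) := (fun p : ℝ × ℝ => p.1 + p.2) ⁻¹' {(j : ℝ) * h} with hS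
  set T : Set (ℝ × ℝ) := grid h ×ˢ grid h with hT
  have hTmeas : MeasurableSet T := (grid_meas h).prod (grid_meas h)
  have hTc : (ν.prod μ) Tᶜ = 0 := by
    have h1 : (ν.prod μ) T = 1 := by
      rw [hT, Measure.prod_prod, hν, hμ, one_mul]
    have : IsProbabilityMeasure (ν.prod μ) := by infer_instance
    rw [measure_compl hTmeas (measure_ne_top _ _), h1, measure_univ, tsub_self]
  have key : (ν.prod μ) S = (ν.prod μ) (S ∩ T) := by
    refine le_antisymm ?_ (measure_mono Set.inter_subset_left)
    calc (ν.prod μ) S ≤ (ν.prod μ) (S ∩ T ∪ Tᶜ) := by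
          refine measure_mono fun p hp => ?_
          by_cases hpT : p ∈ T
          · exact Or.inl ⟨hp, hpT⟩
          · exact Or.inr hpT
      _ ≤ (ν.prod μ) (S ∩ T) + (ν.prod μ) Tᶜ := measure_union_le _ _
      _ = (ν.prod μ) (S ∩ T) := by rw [hTc, add_zero]
  have hset : S ∩ T = ⋃ ℓ ∈ Finset.range (j + 1),
      ({((ℓ : ℝ) * h, ((j - ℓ : ℕ) : ℝ) * h)} : Set (ℝ × ℝ)) := by
    ext p
    simp only [Set.mem_inter_iff, hS, hT, Set.mem_preimage, Set.mem_singleton_iff,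
      Set.mem_prod, grid, Set.mem_setOf_eq, Set.mem_iUnion, Finset.mem_range]
    constructor
    · rintro ⟨hsum, ⟨a, ha⟩, ⟨b, hb⟩⟩
      have hab : a + b = j := by
        apply cast_eq_of_mul h hh
        push_cast
        rw [add_mul, ← ha, ← hb, hsum]
      refine ⟨a, by omega, ?_⟩
      have : j - a = b := by omega
      rw [this, Prod.ext_iff]
      exact ⟨ha, hb⟩
    · rintro ⟨ℓ, hℓ, rfl⟩
      refine ⟨?_, ⟨ℓ, rfl⟩, ⟨j - ℓ, rfl⟩⟩
      push_cast [Nat.cast_sub (by omega : ℓ ≤ j)]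
      ring
  rw [key, hset, measure_biUnion_finset ?_ (fun b _ => measurableSet_singleton _)]
  · refine Finset.sum_congr rfl fun ℓ _ => ?_
    rw [← Set.singleton_prod_singleton, Measure.prod_prod]
  · intro a ha b hb hab
    simp only [Function.onFun, Set.disjoint_singleton]
    intro hcontra
    exact hab (cast_eq_of_mul h hh (congrArg Prod.fst hcontra))

instance convPow_isProb (μ : Measure ℝ) [IsProbabilityMeasure μ] (n : ℕ) :
    IsProbabilityMeasure (convPow μ n) := by
  induction n with
  | zero => rw [convPow]; infer_instance
  | succ n ih => rw [convPow]; exact Measure.isProbabilityMeasure_map measurable_add.aemeasurable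

lemma convPow_grid (h : ℝ) (μ : Measure ℝ) [IsProbabilityMeasure μ]
    (hμ : μ (grid h) = 1) (n : ℕ) : convPow μ n (grid h) = 1 := by
  induction n with
  | zero =>
    rw [convPow, Measure.dirac_apply' _ (grid_meas h)]
    have h0 : (0:ℝ) ∈ grid h := ⟨0, by simp⟩
    simp [Set.indicator_of_mem h0]
  | succ n ih =>
    rw [convPow, Measure.map_apply measurable_add (grid_meas h)]
    have : IsProbabilityMeasure ((convPow μ n).prod μ) := by infer_instance
    refine le_antisymm prob_le_one ?_
    calc (1 : ENNReal) = ((convPow μ n).prod μ) (grid h ×ˢ grid h) := by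
          rw [Measure.prod_prod, ih, hμ, one_mul]
      _ ≤ _ := by
          refine measure_mono ?_
          rintro ⟨a, b⟩ ⟨⟨u, hu⟩, ⟨v, hv⟩⟩
          exact ⟨u + v, by simp only [] at hu hv; push_cast; rw [hu, hv]; ring⟩


lemma sum_Icc_one (f : ℕ → ℝ) (k : ℕ) :
    ∑ ℓ ∈ Finset.Icc 1 (k + 1), f ℓ = ∑ i ∈ Finset.range (k + 1), f (i + 1) := by
  have h1 : Finset.range (k + 2) = insert 0 (Finset.Icc 1 (k + 1)) := by
    ext m; simp; omega
  have h2 := Finset.sum_range_succ' f (k + 1)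
  rw [h1, Finset.sum_insert (by simp)] at h2
  linarith
end Aux

namespace Aux2
open Polynomial Finset


variable (p : ℕ → ℝ) (q : ℕ → ℕ → ℝ)

/-- truncated generating polynomial -/
def P (j : ℕ) : Polynomial ℝ := ∑ i ∈ range (j + 1), C (p i) * X ^ i

lemma coeffP {j m : ℕ} (hm : m ≤ j) : (P p j).coeff m = p m := by
  rw [P, finset_sum_coeff]
  simp only [coeff_C_mul, coeff_X_pow]
  rw [Finset.sum_eq_single m]
  · simp
  · intro b _ hb; simp [Ne.symm hb]
  · intro hmem; exact absurd (Finset.mem_range.2 (by omega)) hmem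

lemma coeffPow (hq0 : ∀ m, q 0 m = if m = 0 then 1 else 0)
    (hqs : ∀ n m, q (n + 1) m = ∑ ℓ ∈ range (m + 1), q n ℓ * p (m - ℓ))
    (j : ℕ) : ∀ n, ∀ m ≤ j, ((P p j) ^ n).coeff m = q n m := by
  intro n
  induction n with
  | zero => intro m hm; simp [hq0 m, coeff_one]
  | succ n ih =>
    intro m hm
    rw [pow_succ, coeff_mul, Finset.Nat.sum_antidiagonal_eq_sum_range_succ_mk, hqs n m]
    refine Finset.sum_congr rfl fun i hi => ?_
    have hi' : i ≤ m := by simpa [Nat.lt_succ_iff] using hi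
    rw [ih i (le_trans hi' hm), coeffP p (le_trans (Nat.sub_le m i) hm)]

/-- key derivative identity on coefficients -/
lemma key_identity (hq0 : ∀ m, q 0 m = if m = 0 then 1 else 0)
    (hqs : ∀ n m, q (n + 1) m = ∑ ℓ ∈ range (m + 1), q n ℓ * p (m - ℓ))
    (n k : ℕ) (hn : 1 ≤ n) :
    ∑ i ∈ range (k + 1), ((i : ℝ) + 1) * q n (i + 1) * p (k - i)
      = n * ∑ i ∈ range (k + 1), ((i : ℝ) + 1) * p (i + 1) * q n (k - i) := by
  set j := k + 1 with hj
  set Pp := P p j with hPp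
  have hco : ∀ m ≤ j, (Pp ^ n).coeff m = q n m := coeffPow p q hq0 hqs j n
  have hid : derivative (Pp ^ n) * Pp = C (n : ℝ) * (derivative Pp * Pp ^ n) := by
    rw [derivative_pow]
    have : Pp ^ (n - 1) * Pp = Pp ^ n := by
      rw [← pow_succ, Nat.sub_add_cancel hn]
    calc C (n:ℝ) * Pp ^ (n-1) * derivative Pp * Pp
        = C (n:ℝ) * (derivative Pp * (Pp ^ (n-1) * Pp)) := by ring
      _ = C (n:ℝ) * (derivative Pp * Pp ^ n) := by rw [this]
  have hcoeff : (derivative (Pp ^ n) * Pp).coeff k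
      = (C (n : ℝ) * (derivative Pp * Pp ^ n)).coeff k := by rw [hid]
  rw [coeff_C_mul, coeff_mul, coeff_mul,
    Finset.Nat.sum_antidiagonal_eq_sum_range_succ_mk,
    Finset.Nat.sum_antidiagonal_eq_sum_range_succ_mk, Finset.mul_sum] at hcoeff
  calc ∑ i ∈ range (k + 1), ((i : ℝ) + 1) * q n (i + 1) * p (k - i)
      = ∑ i ∈ range (k+1), (derivative (Pp ^ n)).coeff i * Pp.coeff (k - i) := by
        refine Finset.sum_congr rfl fun i hi => ?_
        have hi' : i ≤ k := by simpa [Nat.lt_succ_iff] using hi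
        rw [coeff_derivative, hco (i+1) (by omega), coeffP p (by omega : k - i ≤ j)]
        ring
    _ = ∑ i ∈ range (k+1), (n : ℝ) * ((derivative Pp).coeff i * (Pp ^ n).coeff (k - i)) :=
        hcoeff
    _ = (n : ℝ) * ∑ i ∈ range (k+1), (derivative Pp).coeff i * (Pp ^ n).coeff (k - i) := by
        rw [Finset.mul_sum]
    _ = n * ∑ i ∈ range (k + 1), ((i : ℝ) + 1) * p (i + 1) * q n (k - i) := by
        congr 1
        refine Finset.sum_congr rfl fun i hi => ?_
        have hi' : i ≤ k := by simpa [Nat.lt_succ_iff] using hi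
        rw [coeff_derivative, coeffP p (by omega : i + 1 ≤ j), hco (k - i) (by omega)]
        ring

/-- the final algebraic recursion -/
lemma final_algebra (hq0 : ∀ m, q 0 m = if m = 0 then 1 else 0)
    (hqs : ∀ n m, q (n + 1) m = ∑ ℓ ∈ range (m + 1), q n ℓ * p (m - ℓ))
    (n k : ℕ) (hn : 1 ≤ n) (hp0 : p 0 ≠ 0) :
    q n (k + 1) = 1 / (((k : ℝ) + 1) * p 0) *
      ∑ i ∈ range (k + 1),
        (((n : ℝ) + 1) * ((i : ℝ) + 1) - ((k : ℝ) + 1)) * p (i + 1) * q n (k - i) := by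
  have key := key_identity p q hq0 hqs n k hn
  set A := ∑ i ∈ range (k + 1), ((i : ℝ) + 1) * q n (i + 1) * p (k - i) with hA
  set C' := ∑ i ∈ range (k + 1), ((k : ℝ) - i) * p (i + 1) * q n (k - i) with hC
  have hT : ∑ i ∈ range (k + 1),
      (((n : ℝ) + 1) * ((i : ℝ) + 1) - ((k : ℝ) + 1)) * p (i + 1) * q n (k - i)
      = (n : ℝ) * (∑ i ∈ range (k + 1), ((i : ℝ) + 1) * p (i + 1) * q n (k - i)) - C' := by
    rw [hC, Finset.mul_sum, ← Finset.sum_sub_distrib]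
    refine Finset.sum_congr rfl fun i hi => ?_
    ring
  -- reflect C'
  have hrefl : C' = ∑ i ∈ range (k + 1), (i : ℝ) * q n i * p (k + 1 - i) := by
    rw [hC, ← Finset.sum_range_reflect (fun i => ((k : ℝ) - i) * p (i + 1) * q n (k - i)) (k+1)]
    refine Finset.sum_congr rfl fun i hi => ?_
    have hi' : i ≤ k := by simpa [Nat.lt_succ_iff] using hi
    have h1 : k + 1 - 1 - i = k - i := by omega
    have h2 : k - (k - i) = i := by omega
    have h3 : k - i + 1 = k + 1 - i := by omega
    rw [h1, h2, h3]
    have h4 : ((k : ℝ) - (k - i : ℕ)) = (i : ℝ) := by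
      push_cast [Nat.cast_sub hi']; ring
    rw [h4]
    ring
  have hAC : A = C' + ((k : ℝ) + 1) * q n (k + 1) * p 0 := by
    have e1 : ∑ i ∈ range (k + 2), (i : ℝ) * q n i * p (k + 1 - i)
        = ∑ i ∈ range (k + 1), (i : ℝ) * q n i * p (k + 1 - i)
          + ((k : ℝ) + 1) * q n (k + 1) * p 0 := by
      rw [Finset.sum_range_succ]
      norm_num
    have e2 : ∑ i ∈ range (k + 2), (i : ℝ) * q n i * p (k + 1 - i) = A := by
      rw [Finset.sum_range_succ' (fun i => (i : ℝ) * q n i * p (k + 1 - i)) (k+1)]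
      simp only [Nat.cast_zero, zero_mul, zero_add, add_zero]
      rw [hA]
      refine Finset.sum_congr rfl fun i hi => ?_
      have : k + 1 - (i + 1) = k - i := by omega
      rw [this]
      push_cast
      ring
    rw [← hrefl] at e1
    linarith [e1, e2]
  rw [hT, ← key, hAC]
  field_simp
  ring
end Aux2

/-- Eqs. (A.1)–(A.2): recursive scheme for the `n`-fold convolution of a probability measure
supported on the grid `hℕ₀` with positive mass at `0`. -/
theorem convPow_grid_recursion
    (h : ℝ) (hh : 0 < h) (μ : Measure ℝ) [IsProbabilityMeasure μ]
    (hsupp : μ {x : ℝ | ∃ j : ℕ, x = (j : ℝ) * h} = 1)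
    (hzero : 0 < μ {0}) (n : ℕ) (hn : 0 < n) :
    convPow μ n {0} = μ {0} ^ n ∧
    ∀ j : ℕ, 1 ≤ j →
      (convPow μ n {(j : ℝ) * h}).toReal =
        1 / (j * (μ {0}).toReal) *
          ∑ ℓ ∈ Finset.Icc 1 j,
            (((n : ℝ) + 1) * ℓ - j) * (μ {(ℓ : ℝ) * h}).toReal *
              (convPow μ n {((j : ℝ) - (ℓ : ℝ)) * h}).toReal := by
  have hgrid : μ (Aux.grid h) = 1 := hsupp
  have hrec : ∀ m j : ℕ, convPow μ (m + 1) {(j : ℝ) * h}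
      = ∑ ℓ ∈ Finset.range (j + 1),
          convPow μ m {(ℓ : ℝ) * h} * μ {((j - ℓ : ℕ) : ℝ) * h} := by
    intro m j
    have : convPow μ (m + 1)
        = Measure.map (fun p : ℝ × ℝ => p.1 + p.2) ((convPow μ m).prod μ) := rfl
    rw [this]
    exact Aux.conv_singleton h hh (convPow μ m) μ (Aux.convPow_grid h μ hgrid m) hgrid j
  have hzh : ∀ m : ℕ, ((m : ℝ) * h = 0) ↔ m = 0 := by
    intro m
    constructor
    · intro hm
      rcases mul_eq_zero.1 hm with hm | hm
      · exact_mod_cast hm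
      · exact absurd hm hh.ne'
    · rintro rfl; simp
  have part1 : ∀ m : ℕ, convPow μ m {0} = μ {0} ^ m := by
    intro m
    induction m with
    | zero =>
      have : convPow μ 0 = Measure.dirac 0 := rfl
      rw [this, Measure.dirac_apply' _ (measurableSet_singleton _)]
      simp
    | succ m ih =>
      have h0 : ((0 : ℕ) : ℝ) * h = 0 := by simp
      have := hrec m 0
      rw [Finset.sum_range_one] at this
      simp only [Nat.cast_zero, zero_mul, Nat.sub_zero] at this
      rw [this, ih, pow_succ]
  refine ⟨part1 n, ?_⟩
  -- real-valued sequences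
  set p : ℕ → ℝ := fun i => (μ {(i : ℝ) * h}).toReal with hp
  set q : ℕ → ℕ → ℝ := fun m j => (convPow μ m {(j : ℝ) * h}).toReal with hq
  have hq0 : ∀ m : ℕ, q 0 m = if m = 0 then 1 else 0 := by
    intro m
    have : convPow μ 0 = Measure.dirac 0 := rfl
    rw [hq]
    simp only [this, Measure.dirac_apply' _ (measurableSet_singleton _)]
    by_cases hm : m = 0
    · subst hm
      rw [Set.indicator_of_mem (by simp) 1]
      simp
    · rw [Set.indicator_of_notMem (by simp [eq_comm, hzh, hm]) 1]
      simp [hm]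
  have hqs : ∀ m j : ℕ, q (m + 1) j
      = ∑ ℓ ∈ Finset.range (j + 1), q m ℓ * p (j - ℓ) := by
    intro m j
    rw [hq]
    simp only
    rw [hrec m j, ENNReal.toReal_sum (fun a _ =>
      ENNReal.mul_ne_top (measure_ne_top _ _) (measure_ne_top _ _))]
    exact Finset.sum_congr rfl fun ℓ _ => ENNReal.toReal_mul
  have hp0pos : 0 < p 0 := by
    rw [hp]
    simp only [Nat.cast_zero, zero_mul]
    exact ENNReal.toReal_pos hzero.ne' (measure_ne_top _ _)
  intro j hj
  obtain ⟨k, rfl⟩ : ∃ k, j = k + 1 := ⟨j - 1, by omega⟩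
  have key := Aux2.final_algebra p q hq0 hqs n k hn hp0pos.ne'
  have hgoalsum : ∑ ℓ ∈ Finset.Icc 1 (k + 1),
        (((n : ℝ) + 1) * ℓ - (k + 1 : ℕ)) * (μ {(ℓ : ℝ) * h}).toReal *
          (convPow μ n {(((k + 1 : ℕ) : ℝ) - (ℓ : ℝ)) * h}).toReal
      = ∑ i ∈ Finset.range (k + 1),
          (((n : ℝ) + 1) * ((i : ℝ) + 1) - ((k : ℝ) + 1)) * p (i + 1) * q n (k - i) := by
    rw [Aux.sum_Icc_one]
    refine Finset.sum_congr rfl fun i hi => ?_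
    have hik : i ≤ k := by simpa [Nat.lt_succ_iff] using hi
    have hcast : (((k + 1 : ℕ) : ℝ) - ((i + 1 : ℕ) : ℝ)) = ((k - i : ℕ) : ℝ) := by
      push_cast [Nat.cast_sub hik]; ring
    rw [hcast, hp, hq]
    push_cast
    ring_nf
  rw [hgoalsum]
  have hqgoal : (convPow μ n {((k + 1 : ℕ) : ℝ) * h}).toReal = q n (k + 1) := rfl
  rw [hqgoal, key]
  have hmu0 : (μ {(0 : ℝ)}).toReal = p 0 := by
    rw [hp]; simp only [Nat.cast_zero, zero_mul]
  rw [hmu0]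
  push_cast
  ring
end
end

section
/- Let (Ω′, 𝓕′, P′) be an atomless probability space, p ∈ [1, ∞), and let ρ : L^p(Ω′, P′) → ℝ be a law-invariant coherent risk measure, with induced statistical functional R_ρ. Let Y₁, …, Y_u be real-valued random variables on a probability space (Ω, 𝓕, P), let μ̂_u(ω) := (1/u)·∑_{i=1}^u δ_{Y_i(ω)} be the empirical measure, and let μ̂_u^{*n}(ω) denote its n-fold convolution. Then for every n, u ∈ ℕ the map ω ↦ R_ρ(μ̂_u^{*n}(ω)) is (𝓕, 𝓑(ℝ))-measurable. -/
open MeasureTheory ProbabilityTheory Filter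
open scoped ENNReal NNReal Topology

noncomputable section

section Aux

open MeasureTheory

/-- Uniform discrete measure with atoms `v k`, `k : ι`. -/
def discMeas {ι : Type*} [Fintype ι] (v : ι → ℝ) : Measure ℝ :=
  (Fintype.card ι : ℝ≥0∞)⁻¹ • ∑ k : ι, Measure.dirac (v k)

lemma sfinite_finset_sum {α : Type*} [MeasurableSpace α] {ι : Type*} (s : Finset ι)
    (μ : ι → Measure α) [∀ i, SFinite (μ i)] : SFinite (∑ i ∈ s, μ i) := by
  classical
  induction s using Finset.cons_induction with
  | empty => simpa using inferInstanceAs (SFinite (0 : Measure α))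
  | cons i s hi ih =>
      rw [Finset.sum_cons]
      haveI := ih
      infer_instance

lemma measure_map_finset_sum {α β : Type*} [MeasurableSpace α] [MeasurableSpace β]
    {ι : Type*} (s : Finset ι) (μ : ι → Measure α) {f : α → β} (hf : Measurable f) :
    Measure.map f (∑ i ∈ s, μ i) = ∑ i ∈ s, Measure.map f (μ i) := by
  classical
  induction s using Finset.cons_induction with
  | empty => simp
  | cons i s hi ih => rw [Finset.sum_cons, Measure.map_add _ _ hf, ih, Finset.sum_cons]

lemma map_add_prod_discrete {ι κ : Type*} [Fintype ι] [Fintype κ]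
    (c d : ℝ≥0∞) (a : ι → ℝ) (b : κ → ℝ) :
    Measure.map (fun p : ℝ × ℝ => p.1 + p.2)
      ((c • ∑ i : ι, Measure.dirac (a i)).prod (d • ∑ j : κ, Measure.dirac (b j)))
    = (c * d) • ∑ p : ι × κ, Measure.dirac (a p.1 + b p.2) := by
  classical
  haveI h1 : SFinite (∑ i : ι, Measure.dirac (a i)) := sfinite_finset_sum _ _
  haveI h2 : SFinite (∑ j : κ, Measure.dirac (b j)) := sfinite_finset_sum _ _
  ext s hs
  have hadd : Measurable (fun p : ℝ × ℝ => p.1 + p.2) := measurable_add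
  rw [Measure.map_apply hadd hs, Measure.prod_apply (hadd hs)]
  have hslice : ∀ x : ℝ,
      (d • ∑ j : κ, Measure.dirac (b j)) (Prod.mk x ⁻¹' ((fun p : ℝ × ℝ => p.1 + p.2) ⁻¹' s))
        = d * ∑ j : κ, s.indicator (1 : ℝ → ℝ≥0∞) (x + b j) := by
    intro x
    rw [Measure.smul_apply, smul_eq_mul, Measure.finset_sum_apply]
    congr 1
    refine Finset.sum_congr rfl fun j _ => ?_
    have hT : MeasurableSet (Prod.mk x ⁻¹' ((fun p : ℝ × ℝ => p.1 + p.2) ⁻¹' s)) :=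
      (measurable_const.add measurable_id) hs
    rw [Measure.dirac_apply' _ hT]
    simp [Set.indicator_apply, Set.mem_preimage]
  simp_rw [hslice]
  rw [lintegral_smul_measure, lintegral_finset_sum_measure]
  simp_rw [lintegral_dirac]
  rw [Measure.smul_apply, smul_eq_mul, Measure.finset_sum_apply]
  simp_rw [Measure.dirac_apply' _ hs, Finset.mul_sum, ← Finset.mul_sum, Fintype.sum_prod_type]
  ring

lemma convPow_discMeas {ι : Type*} [Fintype ι] [Nonempty ι] (v : ι → ℝ) (n : ℕ) :
    convPow (discMeas v) n = discMeas (fun f : Fin n → ι => ∑ i, v (f i)) := by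
  classical
  induction n with
  | zero =>
      rw [show convPow (discMeas v) 0 = Measure.dirac 0 from rfl, discMeas]
      rw [Finset.univ_unique, Finset.sum_singleton]
      simp
  | succ n ih =>
      have hcard : (0 : ℝ≥0∞) < Fintype.card ι := by
        exact_mod_cast Nat.pos_of_ne_zero Fintype.card_ne_zero
      rw [show convPow (discMeas v) (n+1)
          = Measure.map (fun p : ℝ × ℝ => p.1 + p.2)
              ((convPow (discMeas v) n).prod (discMeas v)) from rfl, ih]
      unfold discMeas
      rw [map_add_prod_discrete]
      congr 1
      · rw [Fintype.card_pi, Fintype.card_pi]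
        simp only [Finset.prod_const, Finset.card_univ, Fintype.card_fin]
        rw [pow_succ, Nat.cast_mul,
          ENNReal.mul_inv (Or.inl (by exact_mod_cast pow_ne_zero n Fintype.card_ne_zero))
            (Or.inl (ENNReal.natCast_ne_top _))]
      · refine Fintype.sum_equiv ((Equiv.prodComm _ _).trans (Fin.consEquiv fun _ => ι)) _ _
          fun p => ?_
        simp only [Equiv.trans_apply, Equiv.prodComm_apply, Prod.swap, Fin.consEquiv_apply]
        rw [Fin.sum_univ_succ]
        simp [Fin.cons_zero, Fin.cons_succ, add_comm]

lemma isProbabilityMeasure_discMeas {ι : Type*} [Fintype ι] [Nonempty ι] (v : ι → ℝ) :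
    IsProbabilityMeasure (discMeas v) := by
  constructor
  rw [discMeas, Measure.smul_apply, smul_eq_mul, Measure.finset_sum_apply]
  simp only [measure_univ]
  rw [Finset.sum_const, Finset.card_univ, nsmul_eq_mul, mul_one,
    ENNReal.inv_mul_cancel (by exact_mod_cast Fintype.card_ne_zero) (ENNReal.natCast_ne_top _)]

lemma discMeas_R_le {Ω' : Type*} [MeasurableSpace Ω'] (P' : Measure Ω') [IsProbabilityMeasure P']
    (hatomless : ∀ 𝔪 : Measure ℝ, IsProbabilityMeasure 𝔪 →
      ∃ X : Ω' → ℝ, Measurable X ∧ Measure.map X P' = 𝔪)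
    (p : ℝ)
    (ρ : (Ω' → ℝ) → ℝ)
    (hmono : ∀ X Y : Ω' → ℝ, MemLp X (ENNReal.ofReal p) P' → MemLp Y (ENNReal.ofReal p) P' →
      X ≤ᵐ[P'] Y → ρ X ≤ ρ Y)
    (hcash : ∀ X : Ω' → ℝ, MemLp X (ENNReal.ofReal p) P' → ∀ b : ℝ,
      ρ (fun ω => X ω + b) = ρ X + b)
    (R : Measure ℝ → ℝ)
    (hR : ∀ X : Ω' → ℝ, Measurable X → MemLp X (ENNReal.ofReal p) P' →
      R (Measure.map X P') = ρ X)
    {ι : Type*} [Fintype ι] [Nonempty ι] (x y : ι → ℝ) :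
    R (discMeas x) ≤ R (discMeas y) + dist x y := by
  classical
  set e : ι ≃ Fin (Fintype.card ι) := Fintype.equivFin ι with he
  set eee : ι → ℝ := fun k => ((e k : ℕ) : ℝ) with heee
  have heinj : Function.Injective eee := by
    intro k k' h
    have : (e k : ℕ) = (e k' : ℕ) := Nat.cast_injective h
    exact e.injective (Fin.val_injective this)
  obtain ⟨Z, hZ, hZlaw⟩ := hatomless (discMeas eee) (isProbabilityMeasure_discMeas eee)
  set φ : (ι → ℝ) → ℝ → ℝ := fun v t => ∑ k : ι, if t = eee k then v k else 0 with hφ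
  have hφmeas : ∀ v, Measurable (φ v) := by
    intro v
    refine Finset.measurable_sum _ fun k _ => Measurable.ite ?_ measurable_const measurable_const
    exact MeasurableSet.of_compl (isOpen_compl_singleton.measurableSet)
  have hφval : ∀ v k, φ v (eee k) = v k := by
    intro v k
    have hrw : φ v (eee k) = ∑ k' : ι, if eee k = eee k' then v k' else 0 := rfl
    rw [hrw, Finset.sum_eq_single k (fun k' _ hk' => if_neg fun h => hk' (heinj h.symm))
      (fun h => absurd (Finset.mem_univ k) h)]
    simp
  have hφmap : ∀ v, Measure.map (φ v) (discMeas eee) = discMeas v := by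
    intro v
    rw [discMeas, Measure.map_smul, measure_map_finset_sum _ _ (hφmeas v)]
    simp_rw [Measure.map_dirac' (hφmeas v), hφval]
    rfl
  have hφbd : ∀ v t, |φ v t| ≤ ∑ k : ι, |v k| := by
    intro v t
    refine (Finset.abs_sum_le_sum_abs _ _).trans (Finset.sum_le_sum fun k _ => ?_)
    split <;> simp [abs_nonneg]
  have hmem : ∀ v, MemLp (fun ω => φ v (Z ω)) (ENNReal.ofReal p) P' := by
    intro v
    refine MemLp.of_bound ((hφmeas v).comp hZ).aestronglyMeasurable (∑ k : ι, |v k|)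
      (ae_of_all _ fun ω => ?_)
    rw [Real.norm_eq_abs]; exact hφbd v (Z ω)
  have hle : ∀ t, φ x t ≤ φ y t + dist x y := by
    intro t
    by_cases h : ∃ k, t = eee k
    · obtain ⟨k, rfl⟩ := h
      rw [hφval, hφval]
      have h1 : dist (x k) (y k) ≤ dist x y := dist_le_pi_dist x y k
      rw [Real.dist_eq] at h1
      have := abs_sub_abs_le_abs_sub (x k) (y k)
      have h2 : x k - y k ≤ |x k - y k| := le_abs_self _
      linarith
    · push_neg at h
      have hx0 : φ x t = 0 := Finset.sum_eq_zero fun k _ => if_neg (h k)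
      have hy0 : φ y t = 0 := Finset.sum_eq_zero fun k _ => if_neg (h k)
      rw [hx0, hy0]
      simpa using dist_nonneg
  have hmap : ∀ v, Measure.map (fun ω => φ v (Z ω)) P' = discMeas v := by
    intro v
    have h := Measure.map_map (μ := P') (hφmeas v) hZ
    rw [hZlaw, hφmap v] at h
    simpa [Function.comp_def] using h.symm
  have hmapx := hmap x
  have hmapy := hmap y
  have hRx : R (discMeas x) = ρ (fun ω => φ x (Z ω)) := by
    rw [← hmapx]; exact hR _ ((hφmeas x).comp hZ) (hmem x)
  have hRy : R (discMeas y) = ρ (fun ω => φ y (Z ω)) := by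
    rw [← hmapy]; exact hR _ ((hφmeas y).comp hZ) (hmem y)
  rw [hRx, hRy]
  calc ρ (fun ω => φ x (Z ω)) ≤ ρ (fun ω => φ y (Z ω) + dist x y) :=
        hmono _ _ (hmem x) ((hmem y).add (memLp_const _)) (ae_of_all _ fun ω => hle (Z ω))
    _ = ρ (fun ω => φ y (Z ω)) + dist x y := hcash _ (hmem y) _

end Aux

/-- Remark 2.4: for a law-invariant coherent risk measure `ρ` on `L^p` of an atomless
probability space with induced statistical functional `R`, the empirical plug-in estimator
`ω ↦ R(μ̂_u^{*n}(ω))` is measurable. -/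
theorem plugin_estimator_measurable
    {Ω' : Type*} [MeasurableSpace Ω'] (P' : Measure Ω') [IsProbabilityMeasure P']
    (hatomless : ∀ 𝔪 : Measure ℝ, IsProbabilityMeasure 𝔪 →
      ∃ X : Ω' → ℝ, Measurable X ∧ Measure.map X P' = 𝔪)
    (p : ℝ) (hp : 1 ≤ p)
    (ρ : (Ω' → ℝ) → ℝ)
    (hmono : ∀ X Y : Ω' → ℝ, MemLp X (ENNReal.ofReal p) P' → MemLp Y (ENNReal.ofReal p) P' →
      X ≤ᵐ[P'] Y → ρ X ≤ ρ Y)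
    (hcash : ∀ X : Ω' → ℝ, MemLp X (ENNReal.ofReal p) P' → ∀ b : ℝ,
      ρ (fun ω => X ω + b) = ρ X + b)
    (hsub : ∀ X Y : Ω' → ℝ, MemLp X (ENNReal.ofReal p) P' → MemLp Y (ENNReal.ofReal p) P' →
      ρ (fun ω => X ω + Y ω) ≤ ρ X + ρ Y)
    (hpos : ∀ X : Ω' → ℝ, MemLp X (ENNReal.ofReal p) P' → ∀ c : ℝ, 0 ≤ c →
      ρ (fun ω => c * X ω) = c * ρ X)
    (hlawinv : ∀ X Y : Ω' → ℝ, MemLp X (ENNReal.ofReal p) P' → MemLp Y (ENNReal.ofReal p) P' →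
      Measure.map X P' = Measure.map Y P' → ρ X = ρ Y)
    (R : Measure ℝ → ℝ)
    (hR : ∀ X : Ω' → ℝ, Measurable X → MemLp X (ENNReal.ofReal p) P' →
      R (Measure.map X P') = ρ X)
    {Ω : Type*} [MeasurableSpace Ω] (P : Measure Ω) [IsProbabilityMeasure P]
    (Y : ℕ → Ω → ℝ) (hY : ∀ i, Measurable (Y i)) (u : ℕ) (hu : 0 < u) (n : ℕ) :
    Measurable fun ω => R (convPow (empMeas Y u ω) n) := by
  classical
  haveI : Nonempty (Fin u) := ⟨⟨0, hu⟩⟩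
  haveI : Nonempty (Fin n → Fin u) := ⟨fun _ => Classical.arbitrary _⟩
  have hemp : ∀ ω, empMeas Y u ω = discMeas (fun i : Fin u => Y i ω) := by
    intro ω
    rw [empMeas, discMeas, Fintype.card_fin,
      ← Fin.sum_univ_eq_sum_range (fun i => Measure.dirac (Y i ω)) u]
  have hg : Measurable (fun x : (Fin n → Fin u) → ℝ => R (discMeas x)) := by
    have hlip : LipschitzWith 1 (fun x : (Fin n → Fin u) → ℝ => R (discMeas x)) := by
      refine LipschitzWith.of_dist_le_mul fun x y => ?_
      simp only [NNReal.coe_one, one_mul]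
      rw [Real.dist_eq, abs_sub_le_iff]
      constructor
      · have := discMeas_R_le P' hatomless p ρ hmono hcash R hR x y
        linarith
      · have := discMeas_R_le P' hatomless p ρ hmono hcash R hR y x
        rw [dist_comm] at this
        linarith
    exact hlip.continuous.measurable
  have hvec : Measurable (fun ω => fun f : Fin n → Fin u => ∑ i, Y (f i) ω) :=
    measurable_pi_lambda _ fun f => Finset.measurable_sum _ fun i _ => hY (f i)
  have : (fun ω => R (convPow (empMeas Y u ω) n))
      = (fun x : (Fin n → Fin u) → ℝ => R (discMeas x)) ∘
        (fun ω => fun f : Fin n → Fin u => ∑ i, Y (f i) ω) := by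
    funext ω
    simp only [Function.comp_apply, hemp ω, convPow_discMeas]
  rw [this]
  exact hg.comp hvec
end
end
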